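/- arXiv:2402.16266 — 4 statements merged into one kernel-verified Lean document; each statement's English description precedes it below -/
import Mathlib

section
/- Let q be an odd positive integer and χ a Dirichlet character mod q with conductor c(χ). Define ρ_χ = (1/φ(q)) ∑_{v mod q, gcd(v,q)=1} χ(v−1) and α(q) = ∏_{ℓ | q} (1 − 1/(ℓ−1)). Then ρ_χ = 0 unless c(χ) is squarefree, in which case ρ_χ = (−1)^{ω(c(χ))} χ(−1) α(q) / ∏_{ℓ | c(χ)} (ℓ−2), where ω(m) denotes the number of distinct prime factors of m. -/
open DirichletCharacter Finset

lemma aux_dvd_of_factorsThrough {q : ℕ} [NeZero q] (χ : DirichletCharacter ℂ q)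
    {d : ℕ} (hd : d ∣ q) (h : FactorsThrough χ d) : χ.conductor ∣ d := by
  set c := χ.conductor with hc
  have hcq : c ∣ q := conductor_dvd_level χ
  have hc0 : c ≠ 0 := conductor_ne_zero χ
  have hd0 : d ≠ 0 := fun h0 ↦ NeZero.ne q (Nat.eq_zero_of_zero_dvd (h0 ▸ hd))
  haveI : NeZero c := ⟨hc0⟩
  haveI : NeZero d := ⟨hd0⟩
  have hgq : Nat.gcd c d ∣ q := (Nat.gcd_dvd_left c d).trans hcq
  have hLq : Nat.lcm c d ∣ q := Nat.lcm_dvd hcq hd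
  haveI : NeZero (Nat.lcm c d) := ⟨Nat.lcm_ne_zero hc0 hd0⟩
  have hFT : FactorsThrough χ (Nat.gcd c d) := by
    rw [factorsThrough_iff_ker_unitsMap hgq]
    intro x hx
    rw [MonoidHom.mem_ker] at hx
    set a := ((x : ZMod q)).val with ha
    have hax : ((a : ℕ) : ZMod q) = (x : ZMod q) := by
      rw [ha, ZMod.natCast_val, ZMod.cast_id]
    have hx1 : ((a : ℕ) : ZMod (Nat.gcd c d)) = ((1 : ℕ) : ZMod (Nat.gcd c d)) := by
      have h2 := congrArg (Units.val) hx
      rw [ZMod.unitsMap_def] at h2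
      simp only [Units.coe_map, MonoidHom.coe_coe, ZMod.castHom_apply, Units.val_one] at h2
      rw [Nat.cast_one, ← h2, ← ZMod.natCast_val]
    have hmod : 1 ≡ a [MOD Nat.gcd c d] :=
      ((ZMod.natCast_eq_natCast_iff _ _ _).mp hx1).symm
    obtain ⟨k, hk1, hk2⟩ := Nat.chineseRemainder' hmod
    -- k is a unit mod lcm c d
    have hkc : Nat.Coprime k c := by
      have : ((k : ℕ) : ZMod c) = 1 := by
        rw [← Nat.cast_one (R := ZMod c)]
        exact (ZMod.natCast_eq_natCast_iff _ _ _).mpr hk1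
      exact (ZMod.isUnit_iff_coprime k c).mp (this ▸ isUnit_one)
    have hkd : Nat.Coprime k d := by
      have hadd : ((k : ℕ) : ZMod d) = ((a : ℕ) : ZMod d) :=
        (ZMod.natCast_eq_natCast_iff _ _ _).mpr hk2
      have : IsUnit ((a : ℕ) : ZMod d) := by
        have h3 : ((a : ℕ) : ZMod d) = ZMod.castHom hd (ZMod d) (x : ZMod q) := by
          rw [ZMod.castHom_apply, ← ZMod.natCast_val]
        rw [h3]
        exact (ZMod.unitsMap hd x).isUnit
      exact (ZMod.isUnit_iff_coprime k d).mp (hadd ▸ this)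
    have hkL : IsUnit ((k : ℕ) : ZMod (Nat.lcm c d)) := by
      rw [ZMod.isUnit_iff_coprime]
      exact Nat.Coprime.coprime_dvd_right (Nat.lcm_dvd_mul c d) (hkc.mul_right hkd)
    obtain ⟨z, hz⟩ := ZMod.unitsMap_surjective hLq hkL.unit
    have hcL : c ∣ Nat.lcm c d := Nat.dvd_lcm_left c d
    have hdL : d ∣ Nat.lcm c d := Nat.dvd_lcm_right c d
    -- χ z = 1
    have hz1 : χ.toUnitHom z = 1 := by
      have hker := (factorsThrough_iff_ker_unitsMap hcq).mp (factorsThrough_conductor χ)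
      apply hker
      rw [MonoidHom.mem_ker]
      have hcomp : ZMod.unitsMap hcq z = ZMod.unitsMap hcL (ZMod.unitsMap hLq z) := by
        rw [← MonoidHom.comp_apply, ZMod.unitsMap_comp]
      rw [hcomp, hz]
      ext
      rw [ZMod.unitsMap_def]
      simp only [Units.coe_map, MonoidHom.coe_coe, IsUnit.unit_spec, map_natCast, Units.val_one]
      rw [← Nat.cast_one (R := ZMod c)]
      exact (ZMod.natCast_eq_natCast_iff _ _ _).mpr hk1
    -- χ (x * z⁻¹) = 1
    have hz2 : χ.toUnitHom (x * z⁻¹) = 1 := by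
      have hker := (factorsThrough_iff_ker_unitsMap hd).mp h
      apply hker
      rw [MonoidHom.mem_ker, map_mul, map_inv]
      have hux : ZMod.unitsMap hd x = ZMod.unitsMap hd z := by
        have hcomp : ZMod.unitsMap hd z = ZMod.unitsMap hdL (ZMod.unitsMap hLq z) := by
          rw [← MonoidHom.comp_apply, ZMod.unitsMap_comp]
        have hLz : ((ZMod.unitsMap hd z : (ZMod d)ˣ) : ZMod d) = ((k : ℕ) : ZMod d) := by
          rw [hcomp, hz, ZMod.unitsMap_def]
          simp only [Units.coe_map, MonoidHom.coe_coe, IsUnit.unit_spec, map_natCast]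
        have hRx : ((ZMod.unitsMap hd x : (ZMod d)ˣ) : ZMod d) = ((a : ℕ) : ZMod d) := by
          rw [ZMod.unitsMap_def]
          simp only [Units.coe_map, MonoidHom.coe_coe, ZMod.castHom_apply]
          rw [← ZMod.natCast_val]
        ext
        rw [hLz, hRx]
        exact (ZMod.natCast_eq_natCast_iff _ _ _).mpr hk2.symm
      rw [hux, mul_inv_cancel]
    -- combine
    rw [MonoidHom.mem_ker]
    have : x = (x * z⁻¹) * z := by group
    rw [this, map_mul, hz1, hz2, one_mul]
  have hle : c ≤ Nat.gcd c d := Nat.sInf_le hFT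
  have hge : Nat.gcd c d ≤ c := Nat.le_of_dvd (Nat.pos_of_ne_zero hc0) (Nat.gcd_dvd_left _ _)
  have : Nat.gcd c d = c := le_antisymm hge hle
  exact this ▸ Nat.gcd_dvd_right c d

lemma aux_sum_hom {G : Type*} [CommGroup G] [Fintype G] (ψ : G →* ℂˣ) :
    ∑ g : G, (ψ g : ℂ) = if (∀ g, ψ g = 1) then (Fintype.card G : ℂ) else 0 := by
  split_ifs with h
  · simp [h]
  · push_neg at h
    obtain ⟨g₀, hg₀⟩ := h
    have hne : ((ψ g₀ : ℂ)) ≠ 1 := by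
      intro hc
      exact hg₀ (Units.ext (by simpa using hc))
    refine eq_zero_of_mul_eq_self_left hne ?_
    rw [Finset.mul_sum]
    simp_rw [← Units.val_mul, ← map_mul]
    exact Fintype.sum_bijective _ (Group.mulLeft_bijective g₀) _ _ fun g ↦ rfl

lemma aux_fiber_sum {G H : Type*} [CommGroup G] [Fintype G] [CommGroup H] [DecidableEq H]
    (f : G →* H) (ψ : G →* ℂˣ) (h : H) (w : G) (hw : f w = h) :
    ∑ g ∈ Finset.univ.filter (fun g ↦ f g = h), (ψ g : ℂ) =
      (ψ w : ℂ) * ∑ k : f.ker, (ψ (k : G) : ℂ) := by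
  rw [Finset.mul_sum]
  simp_rw [← Units.val_mul, ← map_mul]
  rw [Finset.sum_subtype (Finset.univ.filter (fun g ↦ f g = h))
    (p := fun g ↦ f g = h) (fun x ↦ by simp)]
  let e : f.ker ≃ {g // f g = h} :=
  { toFun := fun k ↦ ⟨w * k, by rw [map_mul, hw, MonoidHom.mem_ker.mp k.2, mul_one]⟩
    invFun := fun g ↦ ⟨w⁻¹ * g, by
      rw [MonoidHom.mem_ker, map_mul, map_inv, hw, g.2, inv_mul_cancel]⟩
    left_inv := fun k ↦ by simp
    right_inv := fun g ↦ by simp }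
  rw [← Equiv.sum_comp e (fun g ↦ (ψ (g : G) : ℂ))]
  rfl

lemma aux_card_ker {G H : Type*} [CommGroup G] [Fintype G] [CommGroup H] [Fintype H]
    [DecidableEq H] (f : G →* H) (hf : Function.Surjective f) :
    Fintype.card G = Fintype.card H * Fintype.card f.ker := by
  rw [← Nat.card_eq_fintype_card, ← Nat.card_eq_fintype_card, ← Nat.card_eq_fintype_card,
    Subgroup.card_eq_card_quotient_mul_card_subgroup f.ker]
  congr 1
  exact Nat.card_congr (QuotientGroup.quotientKerEquivOfSurjective f hf).toEquiv

lemma aux_inner {q : ℕ} [NeZero q] (χ : DirichletCharacter ℂ q) {d : ℕ} (hd : d ∣ q) :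
    ∑ u : (ZMod q)ˣ, (if ZMod.unitsMap hd u = (-1 : (ZMod d)ˣ) then χ (u : ZMod q) else 0)
      = if χ.conductor ∣ d then χ (-1) * ((Nat.totient q : ℂ) / (Nat.totient d : ℂ)) else 0 := by
  haveI : NeZero d := ⟨fun h0 ↦ NeZero.ne q (Nat.eq_zero_of_zero_dvd (h0 ▸ hd))⟩
  set f := ZMod.unitsMap hd with hf
  have hsurj : Function.Surjective f := ZMod.unitsMap_surjective hd
  obtain ⟨w, hw⟩ := hsurj (-1)
  have hsum : ∑ u : (ZMod q)ˣ, (if f u = -1 then χ (u : ZMod q) else 0)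
      = ∑ u ∈ Finset.univ.filter (fun u ↦ f u = -1), ((χ.toUnitHom u : ℂˣ) : ℂ) := by
    rw [Finset.sum_filter]
    exact Finset.sum_congr rfl fun u _ ↦ by
      split_ifs <;> simp [MulChar.coe_toUnitHom]
  have hks := aux_sum_hom (χ.toUnitHom.comp f.ker.subtype)
  simp only [MonoidHom.comp_apply, Subgroup.coe_subtype] at hks
  rw [hsum, aux_fiber_sum f χ.toUnitHom (-1) w hw, hks]
  have hiff : (∀ k : f.ker, χ.toUnitHom (k : (ZMod q)ˣ) = 1) ↔ χ.conductor ∣ d := by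
    constructor
    · intro h
      refine aux_dvd_of_factorsThrough χ hd ?_
      rw [factorsThrough_iff_ker_unitsMap hd]
      intro x hx
      exact h ⟨x, hx⟩
    · intro h
      have hFT : FactorsThrough χ d := ⟨hd, changeLevel h (factorsThrough_conductor χ).χ₀, by
        rw [← changeLevel_trans]
        exact (factorsThrough_conductor χ).eq_changeLevel⟩
      rw [factorsThrough_iff_ker_unitsMap hd] at hFT
      exact fun k ↦ hFT k.2
  by_cases h : χ.conductor ∣ d
  · simp only [hiff, if_pos h]
    -- value of χ at w
    have hFT : FactorsThrough χ d := ⟨hd, changeLevel h (factorsThrough_conductor χ).χ₀, by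
      rw [← changeLevel_trans]
      exact (factorsThrough_conductor χ).eq_changeLevel⟩
    have hval : ((χ.toUnitHom w : ℂˣ) : ℂ) = χ (-1) := by
      rw [MulChar.coe_toUnitHom]
      obtain ⟨hdq, χ', hχ'⟩ := hFT
      have h1 : χ ((w : (ZMod q)ˣ) : ZMod q) = χ' (ZMod.cast ((w : (ZMod q)ˣ) : ZMod q)) := by
        rw [hχ']; exact changeLevel_eq_cast_of_dvd χ' hdq w
      have h2 : (ZMod.cast ((w : (ZMod q)ˣ) : ZMod q) : ZMod d) = -1 := by
        have : ((f w : (ZMod d)ˣ) : ZMod d) = -1 := by rw [hw]; simp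
        rw [← this, hf, ZMod.unitsMap_def]
        simp [ZMod.castHom_apply]
      have h3 : χ (-1) = χ' (ZMod.cast (-1 : ZMod q)) := by
        rw [hχ']
        have := changeLevel_eq_cast_of_dvd χ' hdq (-1 : (ZMod q)ˣ)
        simpa using this
      have h4 : (ZMod.cast (-1 : ZMod q) : ZMod d) = -1 := by
        have : (ZMod.castHom hdq (ZMod d)) (-1 : ZMod q) = -1 := by
          rw [map_neg, map_one]
        simpa using this
      rw [h1, h2, h3, h4]
    have hcard : ((Fintype.card f.ker : ℕ) : ℂ)
        = (Nat.totient q : ℂ) / (Nat.totient d : ℂ) := by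
      have h1 := aux_card_ker f hsurj
      rw [ZMod.card_units_eq_totient, ZMod.card_units_eq_totient] at h1
      have hd0 : (Nat.totient d : ℂ) ≠ 0 :=
        Nat.cast_ne_zero.mpr (Nat.totient_pos.mpr (Nat.pos_of_ne_zero (NeZero.ne d))).ne'
      rw [eq_div_iff hd0, mul_comm]
      exact_mod_cast h1.symm
    rw [hval, hcard]
  · simp only [hiff, if_neg h, mul_zero]

lemma aux_moebius_ind {q : ℕ} [NeZero q] (y : ZMod q) :
    (if IsUnit y then (1:ℂ) else 0)
      = ∑ d ∈ q.divisors,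
          ((ArithmeticFunction.moebius d : ℤ) : ℂ) * (if (d ∣ y.val) then 1 else 0) := by
  have h1 : ∀ d, ((ArithmeticFunction.moebius d : ℤ) : ℂ) * (if (d ∣ y.val) then (1:ℂ) else 0)
      = if (d ∣ y.val) then ((ArithmeticFunction.moebius d : ℤ) : ℂ) else 0 := by
    intro d; split_ifs <;> simp
  simp_rw [h1]
  rw [← Finset.sum_filter]
  have hset : q.divisors.filter (fun d => d ∣ y.val) = (Nat.gcd y.val q).divisors := by
    ext e
    simp only [Finset.mem_filter, Nat.mem_divisors, Nat.dvd_gcd_iff]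
    constructor
    · rintro ⟨⟨ha, hb⟩, hc⟩; exact ⟨⟨hc, ha⟩, Nat.gcd_ne_zero_right hb⟩
    · rintro ⟨⟨ha, hb⟩, hc⟩; exact ⟨⟨hb, NeZero.ne q⟩, ha⟩
  rw [hset]
  have h2 : (∑ e ∈ (Nat.gcd y.val q).divisors, ((ArithmeticFunction.moebius e : ℤ) : ℂ))
      = (((∑ e ∈ (Nat.gcd y.val q).divisors, ArithmeticFunction.moebius e : ℤ)) : ℂ) := by
    push_cast; rfl
  have h3 : (∑ e ∈ (Nat.gcd y.val q).divisors, ArithmeticFunction.moebius e)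
      = (1 : ArithmeticFunction ℤ) (Nat.gcd y.val q) := by
    rw [← ArithmeticFunction.moebius_mul_coe_zeta, ArithmeticFunction.coe_mul_zeta_apply]
  rw [h2, h3, ArithmeticFunction.one_apply]
  have h4 : IsUnit y ↔ Nat.gcd y.val q = 1 := by
    have h5 : ((y.val : ℕ) : ZMod q) = y := by rw [ZMod.natCast_val, ZMod.cast_id]
    have h6 := ZMod.isUnit_iff_coprime y.val q
    rw [h5] at h6
    exact h6
  simp only [h4]
  split_ifs <;> simp

lemma aux_cond {q : ℕ} [NeZero q] {d : ℕ} (hd : d ∣ q) (u : (ZMod q)ˣ) :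
    (d ∣ ((u : ZMod q) + 1).val) ↔ ZMod.unitsMap hd u = -1 := by
  haveI : NeZero d := ⟨fun h0 ↦ NeZero.ne q (Nat.eq_zero_of_zero_dvd (h0 ▸ hd))⟩
  rw [← ZMod.natCast_eq_zero_iff]
  have h1 : ((((u : ZMod q) + 1).val : ℕ) : ZMod d) = ZMod.castHom hd (ZMod d) ((u : ZMod q) + 1) := by
    rw [ZMod.castHom_apply, ZMod.natCast_val]
  rw [h1, map_add, map_one]
  have h2 : ZMod.castHom hd (ZMod d) (u : ZMod q) = ((ZMod.unitsMap hd u : (ZMod d)ˣ) : ZMod d) := by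
    rw [ZMod.unitsMap_def]; simp
  rw [h2]
  constructor
  · intro h
    ext
    rw [Units.coe_neg_one]
    linear_combination h
  · intro h
    rw [h, Units.coe_neg_one]
    ring

lemma aux_S {q : ℕ} [NeZero q] (χ : DirichletCharacter ℂ q) :
    ∑ v : (ZMod q)ˣ, χ ((v : ZMod q) - 1)
      = ∑ d ∈ q.divisors, ((ArithmeticFunction.moebius d : ℤ) : ℂ) *
          (if χ.conductor ∣ d then χ (-1) * ((q.totient : ℂ) / (d.totient : ℂ)) else 0) := by
  have lemA : ∀ x : ZMod q, χ x = ∑ u : (ZMod q)ˣ, (if ((u : ZMod q) = x) then χ (u : ZMod q) else 0) := by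
    intro x
    by_cases hx : IsUnit x
    · rw [Finset.sum_eq_single hx.unit]
      · rw [if_pos hx.unit_spec, hx.unit_spec]
      · intro u _ hu
        rw [if_neg (fun he ↦ hu (Units.ext (by rw [he, hx.unit_spec])))]
      · intro h; exact absurd (Finset.mem_univ _) h
    · rw [χ.map_nonunit hx]
      symm
      apply Finset.sum_eq_zero
      intro u _
      rw [if_neg (fun he ↦ hx (by rw [← he]; exact u.isUnit))]
  have lemB : ∀ (c : ℂ) (y : ZMod q), (∑ v : (ZMod q)ˣ, if ((v : ZMod q) = y) then c else 0)
      = c * (if IsUnit y then 1 else 0) := by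
    intro c y
    by_cases hy : IsUnit y
    · rw [if_pos hy, mul_one, Finset.sum_eq_single hy.unit]
      · rw [if_pos hy.unit_spec]
      · intro v _ hv
        rw [if_neg (fun he ↦ hv (Units.ext (by rw [he, hy.unit_spec])))]
      · intro h; exact absurd (Finset.mem_univ _) h
    · rw [if_neg hy, mul_zero]
      apply Finset.sum_eq_zero
      intro v _
      rw [if_neg (fun he ↦ hy (by rw [← he]; exact v.isUnit))]
  calc ∑ v : (ZMod q)ˣ, χ ((v : ZMod q) - 1)
      = ∑ v : (ZMod q)ˣ, ∑ u : (ZMod q)ˣ,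
          (if ((u : ZMod q) = (v : ZMod q) - 1) then χ (u : ZMod q) else 0) := by
        exact Finset.sum_congr rfl fun v _ ↦ lemA _
    _ = ∑ u : (ZMod q)ˣ, ∑ v : (ZMod q)ˣ,
          (if ((v : ZMod q) = (u : ZMod q) + 1) then χ (u : ZMod q) else 0) := by
        rw [Finset.sum_comm]
        refine Finset.sum_congr rfl fun u _ ↦ Finset.sum_congr rfl fun v _ ↦ ?_
        congr 1
        simp only [eq_iff_iff]
        rw [eq_sub_iff_add_eq, eq_comm]
    _ = ∑ u : (ZMod q)ˣ, χ (u : ZMod q) * (if IsUnit ((u : ZMod q) + 1) then 1 else 0) := by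
        exact Finset.sum_congr rfl fun u _ ↦ lemB _ _
    _ = ∑ u : (ZMod q)ˣ, ∑ d ∈ q.divisors, χ (u : ZMod q) *
          (((ArithmeticFunction.moebius d : ℤ) : ℂ) *
            (if (d ∣ ((u : ZMod q) + 1).val) then 1 else 0)) := by
        refine Finset.sum_congr rfl fun u _ ↦ ?_
        rw [aux_moebius_ind ((u : ZMod q) + 1), Finset.mul_sum]
    _ = ∑ d ∈ q.divisors, ∑ u : (ZMod q)ˣ, ((ArithmeticFunction.moebius d : ℤ) : ℂ) *
          (if (d ∣ ((u : ZMod q) + 1).val) then χ (u : ZMod q) else 0) := by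
        rw [Finset.sum_comm]
        refine Finset.sum_congr rfl fun d _ ↦ Finset.sum_congr rfl fun u _ ↦ ?_
        split_ifs <;> ring
    _ = ∑ d ∈ q.divisors, ((ArithmeticFunction.moebius d : ℤ) : ℂ) *
          (if χ.conductor ∣ d then χ (-1) * ((q.totient : ℂ) / (d.totient : ℂ)) else 0) := by
        refine Finset.sum_congr rfl fun d hd ↦ ?_
        have hdq : d ∣ q := (Nat.mem_divisors.mp hd).1
        rw [← Finset.mul_sum, ← aux_inner χ hdq]
        congr 1
        refine Finset.sum_congr rfl fun u _ ↦ ?_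
        congr 1
        simp only [eq_iff_iff]
        exact aux_cond hdq u

lemma aux_sqfree_prod (A : Finset ℕ) (hA : ∀ p ∈ A, p.Prime) : Squarefree (∏ p ∈ A, p) := by
  induction A using Finset.induction_on with
  | empty => simp only [Finset.prod_empty]; exact squarefree_one
  | @insert p A hpA ih =>
    have hp := hA p (mem_insert_self p A)
    have hA' : ∀ r ∈ A, r.Prime := fun r hr ↦ hA r (mem_insert_of_mem hr)
    have hcop : Nat.Coprime p (∏ r ∈ A, r) :=
      Nat.Coprime.prod_right fun r hr ↦
        (Nat.coprime_primes hp (hA' r hr)).mpr (by rintro rfl; exact hpA hr)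
    rw [prod_insert hpA, Nat.squarefree_mul hcop]
    exact ⟨hp.squarefree, ih hA'⟩

lemma aux_val' (A : Finset ℕ) (hA : ∀ p ∈ A, p.Prime) :
    ((ArithmeticFunction.moebius (∏ p ∈ A, p) : ℤ) : ℂ) / ((Nat.totient (∏ p ∈ A, p) : ℕ) : ℂ)
      = ∏ ℓ ∈ A, (-1 / ((ℓ : ℂ) - 1)) := by
  induction A using Finset.induction_on with
  | empty => simp
  | @insert p A hpA ih =>
    have hp := hA p (mem_insert_self p A)
    have hA' : ∀ r ∈ A, r.Prime := fun r hr ↦ hA r (mem_insert_of_mem hr)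
    have hcop : Nat.Coprime p (∏ r ∈ A, r) :=
      Nat.Coprime.prod_right fun r hr ↦
        (Nat.coprime_primes hp (hA' r hr)).mpr (by rintro rfl; exact hpA hr)
    rw [prod_insert hpA, prod_insert hpA,
      ArithmeticFunction.isMultiplicative_moebius.map_mul_of_coprime hcop,
      Nat.totient_mul hcop, ArithmeticFunction.moebius_apply_prime hp, Nat.totient_prime hp,
      ← ih hA']
    have hps : ((p - 1 : ℕ) : ℂ) = (p : ℂ) - 1 := by
      rw [Nat.cast_sub hp.one_lt.le, Nat.cast_one]
    push_cast [hps]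
    rw [div_mul_div_comm]


/-- For odd `q` and a Dirichlet character `χ` mod `q` with conductor `c(χ)`, the average
`ρ_χ = φ(q)⁻¹ ∑_{(v,q)=1} χ(v-1)` vanishes unless `c(χ)` is squarefree, in which case
`ρ_χ = (-1)^{ω(c(χ))} χ(-1) α(q) / ∏_{ℓ ∣ c(χ)} (ℓ-2)`, where
`α(q) = ∏_{ℓ ∣ q} (1 - 1/(ℓ-1))`. -/
theorem stmt_3 (q : ℕ) (hq : 0 < q) (hodd : Odd q) [NeZero q]
    (χ : DirichletCharacter ℂ q) :
    (¬ Squarefree χ.conductor →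
      (1 / (Nat.totient q : ℂ)) * ∑ v : (ZMod q)ˣ, χ ((v : ZMod q) - 1) = 0) ∧
    (Squarefree χ.conductor →
      (1 / (Nat.totient q : ℂ)) * ∑ v : (ZMod q)ˣ, χ ((v : ZMod q) - 1) =
        (-1) ^ (χ.conductor.primeFactors.card) * χ (-1) *
          (∏ ℓ ∈ q.primeFactors, (1 - 1 / ((ℓ : ℂ) - 1))) /
          ∏ ℓ ∈ χ.conductor.primeFactors, ((ℓ : ℂ) - 2)) := by
  have hq0 : q ≠ 0 := hq.ne'
  have hφq : (q.totient : ℂ) ≠ 0 := Nat.cast_ne_zero.mpr (Nat.totient_pos.mpr hq).ne'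
  have hM : (1 / (Nat.totient q : ℂ)) * ∑ v : (ZMod q)ˣ, χ ((v : ZMod q) - 1)
      = χ (-1) * ∑ d ∈ q.divisors.filter (fun d => χ.conductor ∣ d),
          ((ArithmeticFunction.moebius d : ℤ) : ℂ) / ((Nat.totient d : ℕ) : ℂ) := by
    rw [aux_S χ, Finset.mul_sum, Finset.sum_filter, Finset.mul_sum]
    refine Finset.sum_congr rfl fun d hd ↦ ?_
    have hdq : d ∣ q := (Nat.mem_divisors.mp hd).1
    have hd0 : d ≠ 0 := fun h0 ↦ hq0 (Nat.eq_zero_of_zero_dvd (h0 ▸ hdq))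
    have hφd : ((Nat.totient d : ℕ) : ℂ) ≠ 0 :=
      Nat.cast_ne_zero.mpr (Nat.totient_pos.mpr (Nat.pos_of_ne_zero hd0)).ne'
    split_ifs with h
    · field_simp
    · simp
  constructor
  · intro hnsq
    rw [hM]
    have hz : ∑ d ∈ q.divisors.filter (fun d => χ.conductor ∣ d),
        ((ArithmeticFunction.moebius d : ℤ) : ℂ) / ((Nat.totient d : ℕ) : ℂ) = 0 := by
      apply Finset.sum_eq_zero
      intro d hd
      rw [Finset.mem_filter] at hd
      have hnd : ¬ Squarefree d := fun hsd ↦ hnsq (hsd.squarefree_of_dvd hd.2)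
      rw [ArithmeticFunction.moebius_eq_zero_of_not_squarefree hnd]
      simp
    rw [hz, mul_zero]
  · intro hsq
    rw [hM]
    have hcq : χ.conductor ∣ q := conductor_dvd_level χ
    have hPcq : χ.conductor.primeFactors ⊆ q.primeFactors := Nat.primeFactors_mono hcq hq0
    set Pq := q.primeFactors with hPq
    set Pc := χ.conductor.primeFactors with hPc
    -- drop non-squarefree terms
    have hT0 : ∑ d ∈ q.divisors.filter (fun d => χ.conductor ∣ d),
        ((ArithmeticFunction.moebius d : ℤ) : ℂ) / ((Nat.totient d : ℕ) : ℂ)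
        = ∑ d ∈ (q.divisors.filter (fun d => χ.conductor ∣ d)).filter Squarefree,
            ((ArithmeticFunction.moebius d : ℤ) : ℂ) / ((Nat.totient d : ℕ) : ℂ) := by
      symm
      apply Finset.sum_filter_of_ne
      intro d _ hf
      by_contra hnd
      exact hf (by rw [ArithmeticFunction.moebius_eq_zero_of_not_squarefree hnd]; simp)
    have hT1 : ∑ d ∈ (q.divisors.filter (fun d => χ.conductor ∣ d)).filter Squarefree,
          ((ArithmeticFunction.moebius d : ℤ) : ℂ) / ((Nat.totient d : ℕ) : ℂ)
        = ∑ A ∈ Pq.powerset.filter (fun A => Pc ⊆ A), ∏ ℓ ∈ A, (-1 / ((ℓ : ℂ) - 1)) := by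
      apply Finset.sum_nbij' (i := fun d => d.primeFactors) (j := fun A => ∏ ℓ ∈ A, ℓ)
      · intro d hd
        simp only [Finset.mem_filter, Nat.mem_divisors] at hd
        obtain ⟨⟨⟨hdq, -⟩, hcd⟩, hsd⟩ := hd
        have hd0 : d ≠ 0 := fun h0 ↦ hq0 (Nat.eq_zero_of_zero_dvd (h0 ▸ hdq))
        simp only [Finset.mem_filter, Finset.mem_powerset]
        exact ⟨Nat.primeFactors_mono hdq hq0, Nat.primeFactors_mono hcd hd0⟩
      · intro A hA
        simp only [Finset.mem_filter, Finset.mem_powerset] at hA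
        obtain ⟨hAq, hcA⟩ := hA
        have hprimes : ∀ p ∈ A, p.Prime := fun p hp ↦ Nat.prime_of_mem_primeFactors (hAq hp)
        have hsf : Squarefree (∏ p ∈ A, p) := aux_sqfree_prod A hprimes
        have h1 : (∏ p ∈ A, p) ∣ q :=
          dvd_trans (Finset.prod_dvd_prod_of_subset A Pq (fun p => p) hAq)
            (Nat.prod_primeFactors_dvd q)
        have h2 : χ.conductor ∣ ∏ p ∈ A, p := by
          conv_lhs => rw [← Nat.prod_primeFactors_of_squarefree hsq]
          exact Finset.prod_dvd_prod_of_subset Pc A (fun p => p) hcA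
        simp only [Finset.mem_filter, Nat.mem_divisors]
        exact ⟨⟨⟨h1, hq0⟩, h2⟩, hsf⟩
      · intro d hd
        simp only [Finset.mem_filter, Nat.mem_divisors] at hd
        exact Nat.prod_primeFactors_of_squarefree hd.2
      · intro A hA
        simp only [Finset.mem_filter, Finset.mem_powerset] at hA
        exact Nat.primeFactors_prod (fun p hp ↦ Nat.prime_of_mem_primeFactors (hA.1 hp))
      · intro d hd
        simp only [Finset.mem_filter, Nat.mem_divisors] at hd
        have := aux_val' d.primeFactors (fun p hp ↦ Nat.prime_of_mem_primeFactors hp)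
        rw [Nat.prod_primeFactors_of_squarefree hd.2] at this
        exact this
    have hT2 : ∑ A ∈ Pq.powerset.filter (fun A => Pc ⊆ A), ∏ ℓ ∈ A, (-1 / ((ℓ : ℂ) - 1))
        = (∏ ℓ ∈ Pc, (-1 / ((ℓ : ℂ) - 1))) *
            ∑ B ∈ (Pq \ Pc).powerset, ∏ ℓ ∈ B, (-1 / ((ℓ : ℂ) - 1)) := by
      rw [Finset.mul_sum]
      apply Finset.sum_nbij' (i := fun A => A \ Pc) (j := fun B => Pc ∪ B)
      · intro A hA
        simp only [Finset.mem_filter, Finset.mem_powerset] at hA ⊢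
        exact Finset.sdiff_subset_sdiff hA.1 (le_refl _)
      · intro B hB
        simp only [Finset.mem_powerset] at hB
        simp only [Finset.mem_filter, Finset.mem_powerset]
        exact ⟨Finset.union_subset hPcq (hB.trans (Finset.sdiff_subset)), Finset.subset_union_left⟩
      · intro A hA
        simp only [Finset.mem_filter, Finset.mem_powerset] at hA
        exact Finset.union_sdiff_of_subset hA.2
      · intro B hB
        simp only [Finset.mem_powerset] at hB
        have hdisj : Disjoint Pc B :=
          Finset.disjoint_left.mpr fun x hxP hxB ↦ (Finset.mem_sdiff.mp (hB hxB)).2 hxP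
        exact Finset.union_sdiff_cancel_left hdisj
      · intro A hA
        simp only [Finset.mem_filter, Finset.mem_powerset] at hA
        rw [← Finset.prod_sdiff hA.2, mul_comm]
    have hT3 : ∑ B ∈ (Pq \ Pc).powerset, ∏ ℓ ∈ B, (-1 / ((ℓ : ℂ) - 1))
        = ∏ ℓ ∈ Pq \ Pc, (-1 / ((ℓ : ℂ) - 1) + 1) := by
      rw [Finset.prod_add]
      exact Finset.sum_congr rfl fun B _ ↦ by simp
    rw [hT0, hT1, hT2, hT3]
    -- final algebra
    have hne1 : ∀ ℓ ∈ Pq, ((ℓ : ℂ) - 1) ≠ 0 := by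
      intro ℓ hℓ h
      rw [sub_eq_zero] at h
      exact (Nat.prime_of_mem_primeFactors hℓ).one_lt.ne' (by exact_mod_cast h)
    have hne2 : ∀ ℓ ∈ Pq, ((ℓ : ℂ) - 2) ≠ 0 := by
      intro ℓ hℓ h
      have hdvd : ℓ ∣ q := Nat.dvd_of_mem_primeFactors hℓ
      rw [sub_eq_zero] at h
      have hl2 : ℓ = 2 := by exact_mod_cast h
      rw [Nat.odd_iff] at hodd
      rw [hl2] at hdvd
      omega
    have hD : (∏ ℓ ∈ Pc, ((ℓ : ℂ) - 2)) ≠ 0 :=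
      Finset.prod_ne_zero_iff.mpr fun ℓ hℓ ↦ hne2 ℓ (hPcq hℓ)
    have hsplit : (∏ ℓ ∈ Pq, (1 - 1 / ((ℓ : ℂ) - 1)))
        = (∏ ℓ ∈ Pc, (1 - 1 / ((ℓ : ℂ) - 1))) * ∏ ℓ ∈ Pq \ Pc, (1 - 1 / ((ℓ : ℂ) - 1)) := by
      rw [← Finset.prod_sdiff hPcq, mul_comm]
    have hdiffeq : ∏ ℓ ∈ Pq \ Pc, (-1 / ((ℓ : ℂ) - 1) + 1)
        = ∏ ℓ ∈ Pq \ Pc, (1 - 1 / ((ℓ : ℂ) - 1)) := by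
      exact Finset.prod_congr rfl fun ℓ _ ↦ by ring
    have hPcform : ∏ ℓ ∈ Pc, ((1 : ℂ) - 1 / ((ℓ : ℂ) - 1))
        = ((-1 : ℂ) ^ Pc.card * ∏ ℓ ∈ Pc, ((ℓ : ℂ) - 2)) * ∏ ℓ ∈ Pc, (-1 / ((ℓ : ℂ) - 1)) := by
      have hpt : ∀ ℓ ∈ Pc, ((1 : ℂ) - 1 / ((ℓ : ℂ) - 1))
          = ((-1 : ℂ) * ((ℓ : ℂ) - 2)) * (-1 / ((ℓ : ℂ) - 1)) := by
        intro ℓ hℓ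
        have h1 := hne1 ℓ (hPcq hℓ)
        field_simp
        ring
      rw [Finset.prod_congr rfl hpt, Finset.prod_mul_distrib, Finset.prod_mul_distrib,
        Finset.prod_const]
    have hkk : ((-1 : ℂ)) ^ Pc.card * ((-1 : ℂ)) ^ Pc.card = 1 := by
      rw [← pow_add]
      exact Even.neg_one_pow ⟨Pc.card, rfl⟩
    rw [hsplit, hdiffeq, hPcform, eq_div_iff hD]
    linear_combination (-(χ (-1)) * (∏ ℓ ∈ Pc, ((ℓ : ℂ) - 2)) * (∏ ℓ ∈ Pc, (-1 / ((ℓ : ℂ) - 1))) *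
      (∏ ℓ ∈ Pq \ Pc, (1 - 1 / ((ℓ : ℂ) - 1)))) * hkk
end

section
/- Let q be an odd positive integer, α(q) = ∏_{ℓ | q} (1 − 1/(ℓ−1)), and for each Dirichlet character χ mod q set ρ_χ = (1/φ(q)) ∑_{v mod q, gcd(v,q)=1} χ(v−1). Then ∑_{χ mod q} |ρ_χ|² ≤ α(q). -/
open Finset

lemma fiber_card_const {G H : Type*} [AddGroup G] [Fintype G] [DecidableEq G] [AddCommGroup H] [DecidableEq H]
    (f : G →+ H) (hf : Function.Surjective f) (b c : H) :
    (univ.filter (fun x => f x = b)).card = (univ.filter (fun x => f x = c)).card := by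
  obtain ⟨d, hd⟩ := hf (c - b)
  apply Finset.card_bij (fun x _ => x + d)
  · intro a ha
    simp only [mem_filter, mem_univ, true_and] at ha ⊢
    rw [map_add, ha, hd, add_sub_cancel]
  · intro a _ b _ h
    exact add_right_cancel h
  · intro y hy
    simp only [mem_filter, mem_univ, true_and] at hy
    refine ⟨y - d, ?_, by rw [sub_add_cancel]⟩
    simp only [mem_filter, mem_univ, true_and, map_sub, hy, hd]
    abel

lemma card_filter_mem_comp {G H : Type*} [AddGroup G] [Fintype G] [DecidableEq G]
    [AddCommGroup H] [Fintype H] [DecidableEq H]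
    (f : G →+ H) (hf : Function.Surjective f) (T : Finset H) :
    (univ.filter (fun x => f x ∈ T)).card * Fintype.card H
      = T.card * Fintype.card G := by
  set c := (univ.filter (fun x => f x = (0 : H))).card with hc
  have key : ∀ b : H, (univ.filter (fun x => f x = b)).card = c :=
    fun b => fiber_card_const f hf b 0
  have h1 : (univ.filter (fun x => f x ∈ T)).card = T.card * c := by
    rw [Finset.card_eq_sum_card_fiberwise (f := f) (s := univ.filter (fun x => f x ∈ T)) (t := T)
      (fun x hx => (mem_filter.mp hx).2)]
    rw [Finset.sum_congr rfl (fun b hb => ?_), Finset.sum_const, smul_eq_mul]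
    rw [Finset.filter_filter]
    rw [show (univ.filter fun x => f x ∈ T ∧ f x = b) = univ.filter fun x => f x = b by
      apply Finset.filter_congr; intro x _; constructor
      · exact fun h => h.2
      · exact fun h => ⟨h ▸ hb, h⟩]
    exact key b
  have h2 : Fintype.card G = Fintype.card H * c := by
    rw [← Finset.card_univ (α := G),
      Finset.card_eq_sum_card_fiberwise (f := f) (t := (univ : Finset H))
        (fun x _ => mem_univ _),
      Finset.sum_congr rfl (fun b _ => key b), Finset.sum_const, smul_eq_mul, card_univ]
  rw [h1, h2]; ring

/-- number of `x` mod `n` with `x` and `x-1` both units -/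
noncomputable def cnt (n : ℕ) : ℕ := Nat.card {x : ZMod n // IsUnit x ∧ IsUnit (x - 1)}

lemma castHom_eq_val_cast {p k : ℕ} [NeZero (p ^ k)] (h : p ∣ p ^ k) (x : ZMod (p ^ k)) :
    ZMod.castHom h (ZMod p) x = ((x.val : ℕ) : ZMod p) := by
  conv_lhs => rw [← ZMod.natCast_zmod_val x]
  rw [map_natCast]

lemma isUnit_zmod_pow_iff {p k : ℕ} (hp : p.Prime) (hk : 0 < k) (x : ZMod (p ^ k)) :
    IsUnit x ↔ ZMod.castHom (dvd_pow_self p hk.ne') (ZMod p) x ≠ 0 := by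
  haveI : NeZero (p ^ k) := ⟨pow_ne_zero _ hp.pos.ne'⟩
  haveI : NeZero p := ⟨hp.pos.ne'⟩
  rw [castHom_eq_val_cast]
  conv_lhs => rw [← ZMod.natCast_zmod_val x]
  rw [ZMod.isUnit_iff_coprime, Nat.coprime_pow_right_iff hk, Nat.coprime_comm,
    hp.coprime_iff_not_dvd, ne_eq, ZMod.natCast_eq_zero_iff]

lemma cnt_prime_pow {p k : ℕ} (hp : p.Prime) (hp2 : p ≠ 2) (hk : 0 < k) :
    cnt (p ^ k) = p ^ (k - 1) * (p - 2) := by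
  haveI : NeZero (p ^ k) := ⟨pow_ne_zero _ hp.pos.ne'⟩
  haveI : Fact p.Prime := ⟨hp⟩
  set π := ZMod.castHom (dvd_pow_self p hk.ne') (ZMod p) with hπ
  have hsurj : Function.Surjective π.toAddMonoidHom := by
    intro b
    exact ⟨((b.val : ℕ) : ZMod (p ^ k)), by
      simp only [RingHom.toAddMonoidHom_eq_coe, AddMonoidHom.coe_coe, map_natCast,
        ZMod.natCast_zmod_val]⟩
  have hiff : ∀ x : ZMod (p ^ k), (IsUnit x ∧ IsUnit (x - 1)) ↔ (π x ≠ 0 ∧ π x ≠ 1) := by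
    intro x
    rw [isUnit_zmod_pow_iff hp hk x, isUnit_zmod_pow_iff hp hk (x - 1)]
    have : π (x - 1) = π x - 1 := by rw [map_sub, map_one]
    rw [this, sub_ne_zero]
  have hcard : cnt (p ^ k)
      = (univ.filter (fun x : ZMod (p ^ k) => π.toAddMonoidHom x
          ∈ univ.filter (fun b : ZMod p => b ≠ 0 ∧ b ≠ 1))).card := by
    rw [cnt, Nat.card_eq_fintype_card, Fintype.card_subtype]
    congr 1
    apply Finset.filter_congr
    intro x _
    rw [hiff x]
    simp [π]
  have hT : (univ.filter (fun b : ZMod p => b ≠ 0 ∧ b ≠ 1)).card = p - 2 := by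
    have h01 : (0 : ZMod p) ≠ 1 := by
      haveI : Nontrivial (ZMod p) := ZMod.nontrivial_iff.mpr hp.one_lt.ne'
      exact zero_ne_one
    have : (univ.filter (fun b : ZMod p => b ≠ 0 ∧ b ≠ 1))
        = univ \ ({0, 1} : Finset (ZMod p)) := by
      ext b; simp [and_comm, not_or]
    rw [this, Finset.card_sdiff_of_subset (Finset.subset_univ _), Finset.card_univ, ZMod.card,
      Finset.card_insert_of_notMem (by simp [h01]), Finset.card_singleton]
  have := card_filter_mem_comp π.toAddMonoidHom hsurj
      (univ.filter (fun b : ZMod p => b ≠ 0 ∧ b ≠ 1))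
  rw [hT] at this
  rw [hcard]
  apply Nat.eq_of_mul_eq_mul_right hp.pos
  have hcards : Fintype.card (ZMod p) = p := ZMod.card p
  have hcardk : Fintype.card (ZMod (p ^ k)) = p ^ k := ZMod.card _
  rw [hcards, hcardk] at this
  rw [this]
  obtain ⟨k', rfl⟩ : ∃ k', k = k' + 1 := ⟨k - 1, (Nat.succ_pred_eq_of_pos hk).symm⟩
  rw [Nat.add_sub_cancel, pow_succ]
  ring

lemma isUnit_pi_iff {ι : Type*} {M : ι → Type*} [∀ i, Monoid (M i)] (x : ∀ i, M i) :
    IsUnit x ↔ ∀ i, IsUnit (x i) := by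
  constructor
  · intro h i
    exact h.map (Pi.evalMonoidHom M i)
  · intro h
    refine ⟨⟨x, fun i => ((h i).unit⁻¹ : _), ?_, ?_⟩, rfl⟩
    · funext i
      exact (h i).mul_val_inv
    · funext i
      exact (h i).val_inv_mul

lemma isUnit_ringEquiv {A B : Type*} [Ring A] [Ring B] (e : A ≃+* B) (x : A) :
    IsUnit (e x) ↔ IsUnit x :=
  ⟨fun h => by simpa using h.map e.symm.toRingHom, fun h => h.map e.toRingHom⟩

lemma cnt_ringEquiv {A B : Type*} [Ring A] [Ring B] (e : A ≃+* B) :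
    Nat.card {x : A // IsUnit x ∧ IsUnit (x - 1)}
      = Nat.card {x : B // IsUnit x ∧ IsUnit (x - 1)} := by
  apply Nat.card_congr
  refine Equiv.subtypeEquiv e.toEquiv (fun x => ?_)
  simp only [RingEquiv.toEquiv_eq_coe, EquivLike.coe_coe]
  rw [← isUnit_ringEquiv e x, ← isUnit_ringEquiv e (x - 1), map_sub, map_one]

lemma cnt_eq_prod (q : ℕ) (hq : q ≠ 0) :
    cnt q = ∏ p ∈ q.primeFactors, cnt (p ^ q.factorization p) := by
  classical
  set a : q.primeFactors → ℕ := fun p => (p : ℕ) ^ q.factorization p with ha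
  have hane : ∀ i, NeZero (a i) :=
    fun i => ⟨pow_ne_zero _ (Nat.prime_of_mem_primeFactors i.2).pos.ne'⟩
  have hcop : Pairwise (Function.onFun Nat.Coprime a) := by
    intro i j hij
    exact Nat.coprime_pow_primes _ _ (Nat.prime_of_mem_primeFactors i.2)
      (Nat.prime_of_mem_primeFactors j.2) (fun h => hij (Subtype.ext h))
  have hprod : ∏ i, a i = q := by
    have h := Finset.prod_coe_sort q.primeFactors (fun p => p ^ q.factorization p)
    calc ∏ i, a i = ∏ p ∈ q.primeFactors, p ^ q.factorization p := h
    _ = q := by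
        rw [← Nat.support_factorization]
        exact Nat.factorization_prod_pow_eq_self hq
  have e : ZMod q ≃+* Π i, ZMod (a i) := by
    have e0 := ZMod.prodEquivPi a hcop
    rwa [hprod] at e0
  have h1 : cnt q = Nat.card {x : Π i, ZMod (a i) // IsUnit x ∧ IsUnit (x - 1)} :=
    cnt_ringEquiv e
  have h2 : ∀ x : Π i, ZMod (a i),
      (IsUnit x ∧ IsUnit (x - 1)) ↔ ∀ i, IsUnit (x i) ∧ IsUnit (x i - 1) := by
    intro x
    rw [isUnit_pi_iff, isUnit_pi_iff, forall_and]
    have : ∀ i, (x - 1) i = x i - 1 := fun i => rfl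
    simp only [this]
  have h3 : cnt q = ∏ i : q.primeFactors, cnt (a i) := by
    rw [h1, Nat.card_congr (Equiv.subtypeEquivRight h2),
      Nat.card_congr (Equiv.subtypePiEquivPi
        (p := fun i (b : ZMod (a i)) => IsUnit b ∧ IsUnit (b - 1))), Nat.card_pi]
    rfl
  exact h3.trans (Finset.prod_coe_sort q.primeFactors (fun p => cnt (p ^ q.factorization p)))

lemma cnt_div_totient_le (q : ℕ) (hq : 0 < q) (hodd : Odd q) :
    (cnt q : ℝ) / (q.totient : ℝ) ≤ ∏ p ∈ q.primeFactors, (1 - 1 / ((p : ℝ) - 1)) := by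
  have hq' : q ≠ 0 := hq.ne'
  have hp3 : ∀ p ∈ q.primeFactors, 3 ≤ p := by
    intro p hp
    have hprime := Nat.prime_of_mem_primeFactors hp
    have hne2 : p ≠ 2 := by
      rintro rfl
      obtain ⟨k, hk⟩ := Nat.dvd_of_mem_primeFactors hp
      exact (Nat.not_even_iff_odd.mpr hodd) ⟨k, by omega⟩
    have := hprime.two_le
    omega
  have hcnt : (cnt q : ℝ)
      = ∏ p ∈ q.primeFactors, ((p : ℝ) ^ (q.factorization p - 1) * ((p : ℝ) - 2)) := by
    rw [cnt_eq_prod q hq', Nat.cast_prod]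
    refine Finset.prod_congr rfl (fun p hp => ?_)
    have hprime := Nat.prime_of_mem_primeFactors hp
    have h3 := hp3 p hp
    rw [cnt_prime_pow hprime (by omega)
      (hprime.factorization_pos_of_dvd hq' (Nat.dvd_of_mem_primeFactors hp)),
      Nat.cast_mul, Nat.cast_pow]
    congr 1
    rw [Nat.cast_sub (by omega), Nat.cast_ofNat]
  have htot : (q.totient : ℝ)
      = ∏ p ∈ q.primeFactors, ((p : ℝ) ^ (q.factorization p - 1) * ((p : ℝ) - 1)) := by
    rw [Nat.totient_eq_prod_factorization hq', Finsupp.prod, Nat.support_factorization,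
      Nat.cast_prod]
    refine Finset.prod_congr rfl (fun p hp => ?_)
    have h3 := hp3 p hp
    rw [Nat.cast_mul, Nat.cast_pow]
    congr 1
    rw [Nat.cast_sub (by omega), Nat.cast_one]
  rw [hcnt, htot, ← Finset.prod_div_distrib]
  refine le_of_eq (Finset.prod_congr rfl (fun p hp => ?_))
  have h3 : (3 : ℝ) ≤ (p : ℝ) := by exact_mod_cast hp3 p hp
  have hx : ((p : ℝ)) ^ (q.factorization p - 1) ≠ 0 := by positivity
  have hp1 : (p : ℝ) - 1 ≠ 0 := by linarith
  rw [mul_div_mul_left _ _ hx]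
  field_simp
  ring

lemma orth_aux (q : ℕ) [NeZero q] (v w : (ZMod q)ˣ) :
    ∑ χ : DirichletCharacter ℂ q,
      χ ((v : ZMod q) - 1) * (starRingEnd ℂ) (χ ((w : ZMod q) - 1))
    = if IsUnit ((v : ZMod q) - 1) ∧ w = v then (q.totient : ℂ) else 0 := by
  by_cases hw : IsUnit ((w : ZMod q) - 1)
  · have hconj : ∀ χ : DirichletCharacter ℂ q,
        (starRingEnd ℂ) (χ ((w : ZMod q) - 1)) = χ (((w : ZMod q) - 1)⁻¹) := by
      intro χ
      have hnorm : ‖χ ((w : ZMod q) - 1)‖ = 1 := by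
        have := χ.unit_norm_eq_one hw.unit
        rwa [IsUnit.unit_spec] at this
      have hne : χ ((w : ZMod q) - 1) ≠ 0 := by
        intro h; rw [h, norm_zero] at hnorm; norm_num at hnorm
      have h1 : χ ((w : ZMod q) - 1) * (starRingEnd ℂ) (χ ((w : ZMod q) - 1)) = 1 := by
        rw [Complex.mul_conj, Complex.normSq_eq_norm_sq, hnorm]
        norm_num
      have h2 : χ ((w : ZMod q) - 1) * χ (((w : ZMod q) - 1)⁻¹) = 1 := by
        rw [← map_mul, ZMod.mul_inv_of_unit _ hw, map_one]
      exact mul_left_cancel₀ hne (h1.trans h2.symm)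
    rw [Finset.sum_congr rfl (fun χ _ => by rw [hconj χ, mul_comm])]
    rw [DirichletCharacter.sum_char_inv_mul_char_eq ℂ hw ((v : ZMod q) - 1)]
    congr 1
    simp only [eq_iff_iff]
    constructor
    · intro h
      have hv : ((v : ZMod q) : ZMod q) - 1 = (w : ZMod q) - 1 := h.symm
      have : ((w : ZMod q) : ZMod q) = (v : ZMod q) := (sub_left_injective hv).symm
      exact ⟨h ▸ hw, Units.ext this⟩
    · rintro ⟨h1, rfl⟩
      rfl
  · have hz : ∀ χ : DirichletCharacter ℂ q, χ ((w : ZMod q) - 1) = 0 :=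
      fun χ => χ.map_nonunit hw
    simp only [hz, map_zero, mul_zero, Finset.sum_const_zero]
    rw [eq_comm, if_neg]
    rintro ⟨h1, rfl⟩
    exact hw h1

/-- For odd `q`, with `ρ_χ = φ(q)⁻¹ ∑_{(v,q)=1} χ(v-1)`, one has
`∑_{χ mod q} |ρ_χ|² ≤ α(q) = ∏_{ℓ ∣ q} (1 - 1/(ℓ-1))`. -/
theorem stmt_4 (q : ℕ) (hq : 0 < q) (hodd : Odd q) [NeZero q] :
    ∑ χ : DirichletCharacter ℂ q,
        ‖(1 / (Nat.totient q : ℂ)) * ∑ v : (ZMod q)ˣ, χ ((v : ZMod q) - 1)‖ ^ 2 ≤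
      ∏ ℓ ∈ q.primeFactors, (1 - 1 / ((ℓ : ℝ) - 1)) := by
  classical
  have hφ : 0 < q.totient := Nat.totient_pos.mpr hq
  set N : ℕ := (univ.filter (fun v : (ZMod q)ˣ => IsUnit ((v : ZMod q) - 1))).card with hN
  set S : DirichletCharacter ℂ q → ℂ := fun χ => ∑ v : (ZMod q)ˣ, χ ((v : ZMod q) - 1)
    with hS
  have hsum : ∑ χ : DirichletCharacter ℂ q, S χ * (starRingEnd ℂ) (S χ)
      = (q.totient : ℂ) * N := by
    calc
      ∑ χ : DirichletCharacter ℂ q, S χ * (starRingEnd ℂ) (S χ)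
          = ∑ χ : DirichletCharacter ℂ q, ∑ v : (ZMod q)ˣ, ∑ w : (ZMod q)ˣ,
              χ ((v : ZMod q) - 1) * (starRingEnd ℂ) (χ ((w : ZMod q) - 1)) := by
            refine Finset.sum_congr rfl (fun χ _ => ?_)
            rw [hS, map_sum, Finset.sum_mul_sum]
      _ = ∑ v : (ZMod q)ˣ, ∑ w : (ZMod q)ˣ, ∑ χ : DirichletCharacter ℂ q,
              χ ((v : ZMod q) - 1) * (starRingEnd ℂ) (χ ((w : ZMod q) - 1)) := by
            rw [Finset.sum_comm]
            exact Finset.sum_congr rfl (fun v _ => Finset.sum_comm)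
      _ = ∑ v : (ZMod q)ˣ, ∑ w : (ZMod q)ˣ,
              (if IsUnit ((v : ZMod q) - 1) ∧ w = v then (q.totient : ℂ) else 0) :=
            Finset.sum_congr rfl (fun v _ => Finset.sum_congr rfl (fun w _ => orth_aux q v w))
      _ = ∑ v : (ZMod q)ˣ, (if IsUnit ((v : ZMod q) - 1) then (q.totient : ℂ) else 0) := by
            refine Finset.sum_congr rfl (fun v _ => ?_)
            by_cases hP : IsUnit ((v : ZMod q) - 1)
            · simp [hP]
            · simp [hP]
      _ = (q.totient : ℂ) * N := by
            rw [Finset.sum_ite, Finset.sum_const, Finset.sum_const_zero, add_zero, hN]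
            rw [nsmul_eq_mul, mul_comm]
  have hterm : ∀ χ : DirichletCharacter ℂ q,
      ‖(1 / (Nat.totient q : ℂ)) * S χ‖ ^ 2
        = (1 / (q.totient : ℝ)) ^ 2 * (S χ * (starRingEnd ℂ) (S χ)).re := by
    intro χ
    rw [norm_mul, mul_pow, Complex.mul_conj, Complex.ofReal_re, Complex.normSq_eq_norm_sq]
    congr 2
    rw [norm_div, norm_one, Complex.norm_natCast]
  calc
    ∑ χ : DirichletCharacter ℂ q,
        ‖(1 / (Nat.totient q : ℂ)) * ∑ v : (ZMod q)ˣ, χ ((v : ZMod q) - 1)‖ ^ 2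
        = ∑ χ : DirichletCharacter ℂ q,
            (1 / (q.totient : ℝ)) ^ 2 * (S χ * (starRingEnd ℂ) (S χ)).re :=
          Finset.sum_congr rfl (fun χ _ => hterm χ)
    _ = (1 / (q.totient : ℝ)) ^ 2 * ((q.totient : ℝ) * N) := by
          rw [← Finset.mul_sum, ← Complex.re_sum, hsum]
          norm_num
    _ = (cnt q : ℝ) / (q.totient : ℝ) := by
          have hNc : N = cnt q := by
            rw [hN, ← Fintype.card_subtype, cnt, Nat.card_eq_fintype_card]
            exact Fintype.card_congr
              { toFun := fun v => ⟨(v.1 : ZMod q), v.1.isUnit, v.2⟩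
                invFun := fun x => ⟨x.2.1.unit, by rw [IsUnit.unit_spec]; exact x.2.2⟩
                left_inv := fun v => Subtype.ext (Units.ext (IsUnit.unit_spec _))
                right_inv := fun x => Subtype.ext x.2.1.unit_spec }
          rw [hNc]
          have hφ' : (q.totient : ℝ) ≠ 0 := by positivity
          field_simp
    _ ≤ ∏ ℓ ∈ q.primeFactors, (1 - 1 / ((ℓ : ℝ) - 1)) := cnt_div_totient_le q hq hodd
end

section
/- Let x ≥ 4 and let q be a positive integer with 3 | q and q odd. Then 3·#{n ≤ x : gcd(φ(n), q) = 1 and φ(n) ≡ a (mod 3)} ≥ #{n ≤ x/4 : gcd(φ(n), q) = 1}, for any residue a coprime to 3. -/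
lemma stmt13_aux (a : ZMod 3) (ha : IsUnit a) : ∀ z : ZMod 3, z ≠ 0 → z = a ∨ z = -a := by
  revert ha; revert a; decide

/-- For `x ≥ 4`, odd `q` divisible by 3, and any residue `a` coprime to 3,
`3·#{n ≤ x : (φ(n),q)=1, φ(n) ≡ a (mod 3)} ≥ #{n ≤ x/4 : (φ(n),q)=1}`. -/
theorem stmt_13 (x : ℝ) (hx : 4 ≤ x) (q : ℕ) (hq : 0 < q) (h3 : 3 ∣ q) (hodd : Odd q)
    (a : ZMod 3) (ha : IsUnit a) :
    ((Finset.Icc 1 ⌊x / 4⌋₊).filter (fun n : ℕ => Nat.gcd (Nat.totient n) q = 1)).card ≤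
      3 * ((Finset.Icc 1 ⌊x⌋₊).filter
        (fun n : ℕ => Nat.gcd (Nat.totient n) q = 1 ∧ ((Nat.totient n : ZMod 3) = a))).card := by
  classical
  set T := (Finset.Icc 1 ⌊x⌋₊).filter
      (fun n : ℕ => Nat.gcd (Nat.totient n) q = 1 ∧ ((Nat.totient n : ZMod 3) = a)) with hT
  set S := (Finset.Icc 1 ⌊x/4⌋₊).filter (fun n : ℕ => Nat.gcd (Nat.totient n) q = 1) with hS
  have hx0 : (0:ℝ) ≤ x := by linarith
  -- basic facts
  have hfloor : ∀ n : ℕ, n ∈ Finset.Icc 1 ⌊x/4⌋₊ → (4 * n : ℕ) ≤ ⌊x⌋₊ := by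
    intro n hn
    have hn4 : (n : ℝ) ≤ x / 4 := by
      have := (Finset.mem_Icc.mp hn).2
      exact_mod_cast (Nat.le_floor_iff (by positivity)).mp this
    have : ((4 * n : ℕ) : ℝ) ≤ x := by push_cast; linarith
    exact Nat.le_floor this
  have hcop2 : Nat.Coprime 2 q := Nat.coprime_two_left.mpr hodd
  have hdichot : ∀ z : ZMod 3, z ≠ 0 → z = a ∨ z = -a :=
    stmt13_aux a ha
  have hne3 : ∀ n : ℕ, Nat.gcd (Nat.totient n) q = 1 → ((Nat.totient n : ZMod 3) ≠ 0) := by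
    intro n hn h0
    have h3d : (3:ℕ) ∣ Nat.totient n := by
      rwa [ZMod.natCast_eq_zero_iff] at h0
    have : (3:ℕ) ∣ 1 := hn ▸ Nat.dvd_gcd h3d h3
    omega
  -- split S into three parts
  set A := S.filter (fun n => ((Nat.totient n : ZMod 3) = a)) with hA
  set B := S.filter (fun n => ((Nat.totient n : ZMod 3) = -a) ∧ Odd n) with hB
  set C := S.filter (fun n => ((Nat.totient n : ZMod 3) = -a) ∧ Even n) with hC
  have hcover : S ⊆ A ∪ B ∪ C := by
    intro n hn
    have hn' := hn
    rw [hS, Finset.mem_filter] at hn'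
    rcases hdichot _ (hne3 n hn'.2) with h | h
    · exact Finset.mem_union.mpr (Or.inl (Finset.mem_union.mpr (Or.inl
        (Finset.mem_filter.mpr ⟨hn, h⟩))))
    · rcases Nat.even_or_odd n with he | ho
      · exact Finset.mem_union.mpr (Or.inr (Finset.mem_filter.mpr ⟨hn, h, he⟩))
      · exact Finset.mem_union.mpr (Or.inl (Finset.mem_union.mpr (Or.inr
          (Finset.mem_filter.mpr ⟨hn, h, ho⟩))))
  have hAT : A.card ≤ T.card := by
    apply Finset.card_le_card
    intro n hn
    rw [hA, Finset.mem_filter, hS, Finset.mem_filter, Finset.mem_Icc] at hn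
    refine Finset.mem_filter.mpr ⟨Finset.mem_Icc.mpr ⟨hn.1.1.1, ?_⟩, hn.1.2, hn.2⟩
    refine le_trans hn.1.1.2 (Nat.floor_le_floor ?_)
    linarith
  have hBT : B.card ≤ T.card := by
    apply Finset.card_le_card_of_injOn (fun n => 4 * n)
    · intro n hn
      rw [Finset.mem_coe, hB, Finset.mem_filter, hS, Finset.mem_filter] at hn
      obtain ⟨⟨hmem, hgcd⟩, hm3, hoddn⟩ := hn
      have hcop : Nat.Coprime 4 n := by
        have h2 : Nat.Coprime 2 n := Nat.coprime_two_left.mpr hoddn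
        simpa using h2.pow_left 2
      have htot : Nat.totient (4 * n) = 2 * Nat.totient n := by
        have h4 : Nat.totient 4 = 2 := by decide
        rw [Nat.totient_mul hcop, h4]
      refine Finset.mem_filter.mpr ⟨Finset.mem_Icc.mpr ⟨?_, hfloor n hmem⟩, ?_, ?_⟩
      · have := (Finset.mem_Icc.mp hmem).1; show 1 ≤ 4 * n; omega
      · rw [htot]; exact Nat.Coprime.mul hcop2 hgcd
      · rw [htot]; push_cast; rw [hm3]; ring_nf
        have : (2 : ZMod 3) = -1 := by decide
        rw [this]; ring
    · intro n _ m _ h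
      simpa using h
  have hCT : C.card ≤ T.card := by
    apply Finset.card_le_card_of_injOn (fun n => 2 * n)
    · intro n hn
      rw [Finset.mem_coe, hC, Finset.mem_filter, hS, Finset.mem_filter] at hn
      obtain ⟨⟨hmem, hgcd⟩, hm3, hevn⟩ := hn
      have h2d : (2:ℕ) ∣ n := hevn.two_dvd
      have htot : Nat.totient (2 * n) = 2 * Nat.totient n :=
        Nat.totient_mul_of_prime_of_dvd Nat.prime_two h2d
      have h2n : (2 * n : ℕ) ≤ ⌊x⌋₊ := le_trans (by omega) (hfloor n hmem)
      refine Finset.mem_filter.mpr ⟨Finset.mem_Icc.mpr ⟨?_, h2n⟩, ?_, ?_⟩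
      · have := (Finset.mem_Icc.mp hmem).1; show 1 ≤ 2 * n; omega
      · rw [htot]; exact Nat.Coprime.mul hcop2 hgcd
      · rw [htot]; push_cast; rw [hm3]
        have : (2 : ZMod 3) = -1 := by decide
        rw [this]; ring
    · intro n _ m _ h
      simpa using h
  calc S.card ≤ (A ∪ B ∪ C).card := Finset.card_le_card hcover
    _ ≤ (A ∪ B).card + C.card := Finset.card_union_le _ _
    _ ≤ A.card + B.card + C.card := by
        have := Finset.card_union_le A B; omega
    _ ≤ 3 * T.card := by omega
end

section
/- For all x ≥ 3 and z = x^{1/log log x}, the number Ψ(x, z) of z-smooth integers up to x satisfies Ψ(x, z) ≪ x/(log x)^{(1+o(1)) log log log x} as x → ∞. -/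
open Real Filter

private lemma harmonic_le (J : ℕ) : ∑ j ∈ Finset.Icc 1 J, (1 / j : ℝ) ≤ 1 + Real.log J := by
  induction J with
  | zero => simp
  | succ J ih =>
    rcases Nat.eq_zero_or_pos J with h | h
    · subst h; simp
    · rw [Finset.sum_Icc_succ_top (by omega)]
      have hJ : (0:ℝ) < J := by exact_mod_cast h
      have key : Real.log J + 1 / ((J:ℝ)+1) ≤ Real.log ((J:ℝ)+1) := by
        have h1 : Real.log ((J:ℝ)/((J:ℝ)+1)) ≤ (J:ℝ)/((J:ℝ)+1) - 1 :=
          Real.log_le_sub_one_of_pos (by positivity)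
        have h2 : Real.log ((J:ℝ)/((J:ℝ)+1)) = Real.log J - Real.log ((J:ℝ)+1) :=
          Real.log_div (by positivity) (by positivity)
        have h3 : (J:ℝ)/((J:ℝ)+1) - 1 = -(1/((J:ℝ)+1)) := by field_simp; ring
        rw [h2, h3] at h1; linarith
      have : ((J:ℕ)+1 : ℝ) = (J:ℝ)+1 := by push_cast; ring
      push_cast
      linarith [ih]

private lemma cheb_dyadic (j : ℕ) (Q : Finset ℕ)
    (hQ : ∀ p ∈ Q, Nat.Prime p ∧ 2^j ≤ p ∧ p < 2^(j+1)) :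
    j * Q.card ≤ 2^(j+2) := by
  have h1 : (2^j : ℕ)^Q.card ≤ ∏ p ∈ Q, p :=
    Finset.pow_card_le_prod _ _ _ (fun p hp => (hQ p hp).2.1)
  have hsub : Q ⊆ Finset.filter Nat.Prime (Finset.range (2^(j+1))) := by
    intro p hp
    simp only [Finset.mem_filter, Finset.mem_range]
    exact ⟨(hQ p hp).2.2, (hQ p hp).1⟩
  have h2 : ∏ p ∈ Q, p ≤ ∏ p ∈ Finset.filter Nat.Prime (Finset.range (2^(j+1))), p := by
    apply Finset.prod_le_prod_of_subset_of_one_le' hsub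
    intro p hp _
    exact (Nat.prime_of_mem_primesBelow (by simpa [Nat.primesBelow] using hp)).one_lt.le
  have h3 : ∏ p ∈ Finset.filter Nat.Prime (Finset.range (2^(j+1))), p = primorial (2^(j+1) - 1) := by
    unfold primorial
    congr 1
    congr 1
    have : 2^(j+1) - 1 + 1 = 2^(j+1) := by
      have : 1 ≤ 2^(j+1) := Nat.one_le_two_pow
      omega
    rw [this]
  have h4 : primorial (2^(j+1) - 1) ≤ 4^(2^(j+1) - 1) := primorial_le_4_pow _
  have h5 : (4:ℕ)^(2^(j+1) - 1) ≤ 4^(2^(j+1)) := Nat.pow_le_pow_right (by norm_num) (Nat.sub_le _ _)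
  have h6 : (4:ℕ)^(2^(j+1)) = 2^(2^(j+2)) := by
    rw [show (4:ℕ) = 2^2 by norm_num, ← pow_mul]
    congr 1
    rw [pow_succ 2 (j+1)]
    ring
  have h7 : (2:ℕ)^(j * Q.card) ≤ 2^(2^(j+2)) := by
    calc (2:ℕ)^(j * Q.card) = (2^j)^Q.card := by rw [pow_mul]
    _ ≤ ∏ p ∈ Q, p := h1
    _ ≤ _ := le_trans h2 (le_trans (le_of_eq h3) (le_trans h4 (le_trans h5 (le_of_eq h6))))
  exact (Nat.pow_le_pow_iff_right (by norm_num)).mp h7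

private lemma geom_sum_le' {r : ℝ} (h0 : 0 ≤ r) (h1 : r < 1) (A : ℕ) :
    ∑ a ∈ Finset.range A, r ^ a ≤ (1 - r)⁻¹ := by
  rw [geom_sum_eq h1.ne]
  rw [div_le_iff_of_neg (by linarith : r - 1 < 0)]
  have : 0 ≤ r ^ A := pow_nonneg h0 A
  have h2 : (1 - r)⁻¹ * (r-1) = -1 := by
    rw [inv_mul_eq_div, div_eq_iff (by linarith : (1:ℝ) - r ≠ 0)]; ring
  nlinarith [pow_nonneg h0 A]

private lemma inv_one_sub_le {t : ℝ} (h0 : 0 ≤ t) (h1 : t ≤ 5/7) :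
    (1 - t)⁻¹ ≤ Real.exp (3.5 * t) := by
  have h2 : (0:ℝ) < 1 - t := by linarith
  have h3 : (1 - t)⁻¹ = t / (1 - t) + 1 := by field_simp; ring
  have h4 : t / (1 - t) ≤ 3.5 * t := by
    rw [div_le_iff₀ h2]; nlinarith
  calc (1-t)⁻¹ = t/(1-t) + 1 := h3
    _ ≤ Real.exp (t/(1-t)) := Real.add_one_le_exp _
    _ ≤ Real.exp (3.5 * t) := Real.exp_le_exp.mpr h4

private lemma prod_factorization_eq {n : ℕ} (hn : n ≠ 0) {P : Finset ℕ} (hP : n.primeFactors ⊆ P) :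
    ∏ p ∈ P, p ^ n.factorization p = n := by
  have h := Nat.factorization_prod_pow_eq_self hn
  rw [Finsupp.prod] at h
  rw [Nat.support_factorization] at h
  conv_rhs => rw [← h]
  refine (Finset.prod_subset hP fun p _ hp => ?_).symm
  have h0 : n.factorization p = 0 := by
    by_contra hne
    exact hp (by rw [← Nat.support_factorization]; exact Finsupp.mem_support_iff.mpr hne)
  rw [h0, pow_zero]

private lemma rpow_neg_eq_prod {n : ℕ} (hn : n ≠ 0) {P : Finset ℕ}
    (hP : n.primeFactors ⊆ P) (hpos : ∀ p ∈ P, 0 < p) (σ : ℝ) :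
    (n:ℝ) ^ (-σ) = ∏ p ∈ P, ((p:ℝ) ^ (-σ)) ^ n.factorization p := by
  conv_lhs => rw [← prod_factorization_eq hn hP]
  push_cast
  rw [← Real.finset_prod_rpow P _ (fun p hp => by positivity) (-σ)]
  apply Finset.prod_congr rfl
  intro p hp
  have hp0 : (0:ℝ) < (p:ℝ) := by exact_mod_cast hpos p hp
  rw [← Real.rpow_natCast ((p:ℝ) ^ (-σ)) (n.factorization p),
      ← Real.rpow_natCast (p:ℝ) (n.factorization p),
      ← Real.rpow_mul hp0.le, ← Real.rpow_mul hp0.le, mul_comm]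
private lemma exp3_ge16 : (16:ℝ) ≤ Real.exp 3 := by
  have h1 : Real.exp 3 = Real.exp 1 ^ (3:ℕ) := by
    rw [← Real.exp_nat_mul]; norm_num
  have h2 : (2.7182818283:ℝ)^(3:ℕ) ≤ Real.exp 1 ^ (3:ℕ) :=
    pow_le_pow_left₀ (by norm_num) (le_of_lt Real.exp_one_gt_d9) 3
  rw [h1]
  nlinarith [h2]

private lemma exp_exp3_ge1024 : (1024:ℝ) ≤ Real.exp (Real.exp 3) := by
  have h1 : Real.exp 16 ≤ Real.exp (Real.exp 3) := Real.exp_le_exp.mpr exp3_ge16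
  have h2 : Real.exp 16 = Real.exp 2 ^ (8:ℕ) := by rw [← Real.exp_nat_mul]; norm_num
  have h3 : (3:ℝ) ≤ Real.exp 2 := by linarith [Real.add_one_le_exp 2]
  have h4 : (3:ℝ)^(8:ℕ) ≤ Real.exp 2 ^ (8:ℕ) := pow_le_pow_left₀ (by norm_num) h3 8
  have h5 : (1024:ℝ) ≤ Real.exp 16 := by rw [h2]; nlinarith [h4]
  linarith

private lemma log_sq_le {y : ℝ} (hy : 1024 ≤ y) : Real.log y * Real.log y ≤ y / 2 := by
  have hy0 : (0:ℝ) < y := by linarith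
  have h1 : Real.log y = 4 * Real.log (Real.sqrt (Real.sqrt y)) := by
    rw [Real.log_sqrt (Real.sqrt_nonneg y), Real.log_sqrt hy0.le]; ring
  have h2 : Real.log (Real.sqrt (Real.sqrt y)) ≤ Real.sqrt (Real.sqrt y) := by
    linarith [Real.log_le_sub_one_of_pos (show 0 < Real.sqrt (Real.sqrt y) by positivity)]
  have h3 : Real.log y ≤ 4 * Real.sqrt (Real.sqrt y) := by rw [h1]; linarith
  have h4 : Real.sqrt (Real.sqrt y) * Real.sqrt (Real.sqrt y) = Real.sqrt y :=
    Real.mul_self_sqrt (Real.sqrt_nonneg y)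
  have h5 : Real.sqrt y * Real.sqrt y = y := Real.mul_self_sqrt hy0.le
  have h6 : (32:ℝ) ≤ Real.sqrt y :=
    (Real.le_sqrt (by norm_num) hy0.le).mpr (by nlinarith)
  have h7 : 0 ≤ Real.log y := Real.log_nonneg (by linarith)
  have h8 : Real.log y * Real.log y ≤ 16 * Real.sqrt y := by nlinarith
  have h9 : 16 * Real.sqrt y ≤ y/2 := by nlinarith
  linarith

private lemma card_le_x {x : ℝ} (hx : 0 ≤ x) (Q : ℕ → Prop) [DecidablePred Q] :
    (((Finset.Icc 1 ⌊x⌋₊).filter Q).card : ℝ) ≤ x := by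
  calc (((Finset.Icc 1 ⌊x⌋₊).filter Q).card : ℝ)
      ≤ ((Finset.Icc 1 ⌊x⌋₊).card : ℝ) := by exact_mod_cast Finset.card_filter_le _ _
    _ = (⌊x⌋₊ : ℝ) := by rw [Nat.card_Icc]; simp
    _ ≤ x := Nat.floor_le hx
set_option maxHeartbeats 4000000 in
private lemma main_bound {x : ℝ} (hx : Real.exp (Real.exp (Real.exp 3)) ≤ x) :
    (((Finset.Icc 1 ⌊x⌋₊).filter
        (fun n : ℕ => ∀ p ∈ n.primeFactors, (p : ℝ) ≤ x ^ (1 / Real.log (Real.log x)))).card : ℝ) ≤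
      x * Real.exp ((196 - Real.log (Real.log (Real.log x))) * Real.log (Real.log x)) := by
  classical
  have hx0 : (0:ℝ) < x := lt_of_lt_of_le (Real.exp_pos _) hx
  set L1 := Real.log x with hL1def
  set u := Real.log L1 with hudef
  set L3 := Real.log u with hL3def
  have h16 : (16:ℝ) ≤ Real.exp 3 := exp3_ge16
  have hL1 : Real.exp (Real.exp 3) ≤ L1 := by
    rw [hL1def]
    calc Real.exp (Real.exp 3) = Real.log (Real.exp (Real.exp (Real.exp 3))) :=
          (Real.log_exp _).symm
      _ ≤ Real.log x := Real.log_le_log (Real.exp_pos _) hx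
  have hu : Real.exp 3 ≤ u := by
    rw [hudef]
    calc Real.exp 3 = Real.log (Real.exp (Real.exp 3)) := (Real.log_exp _).symm
      _ ≤ Real.log L1 := Real.log_le_log (Real.exp_pos _) hL1
  have hL3 : 3 ≤ L3 := by
    rw [hL3def]
    calc (3:ℝ) = Real.log (Real.exp 3) := (Real.log_exp _).symm
      _ ≤ Real.log u := Real.log_le_log (Real.exp_pos _) hu
  have hu16 : (16:ℝ) ≤ u := le_trans h16 hu
  have hupos : (0:ℝ) < u := by linarith
  have hL3pos : (0:ℝ) < L3 := by linarith
  have hL1_1024 : (1024:ℝ) ≤ L1 := le_trans exp_exp3_ge1024 hL1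
  have hL1pos : (0:ℝ) < L1 := by linarith
  -- beta and sigma
  set β := u * L3 / L1 with hβdef
  have hβpos : 0 < β := by positivity
  have huL3 : u * L3 ≤ L1 / 2 := by
    have h1 : L3 ≤ u := by
      rw [hL3def]; linarith [Real.log_le_sub_one_of_pos hupos]
    have h2 : u * u ≤ L1 / 2 := by
      rw [hudef]; exact log_sq_le hL1_1024
    nlinarith
  have hβhalf : β ≤ 1/2 := by
    rw [hβdef, div_le_iff₀ hL1pos]; linarith
  set σ := 1 - β with hσdef
  have hσhalf : 1/2 ≤ σ := by rw [hσdef]; linarith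
  have hσpos : 0 < σ := by linarith
  have hσ1 : σ < 1 := by rw [hσdef]; linarith
  -- z and m and P
  set z := x ^ (1 / u) with hzdef
  have hzpos : 0 < z := Real.rpow_pos_of_pos hx0 _
  have hlogz : Real.log z = L1 / u := by
    rw [hzdef, Real.log_rpow hx0, ← hL1def, one_div, inv_mul_eq_div]
  have huleL1 : u ≤ L1 := by
    rw [hudef]; linarith [Real.log_le_sub_one_of_pos hL1pos]
  have hz2 : 2 ≤ z := by
    have h1 : (1:ℝ) ≤ L1 / u := by
      rw [le_div_iff₀ hupos]; linarith
    have h2 : Real.exp 1 ≤ Real.exp (Real.log z) := by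
      rw [hlogz]; exact Real.exp_le_exp.mpr h1
    rw [Real.exp_log hzpos] at h2
    nlinarith [Real.exp_one_gt_d9]
  set m := ⌊z⌋₊ with hmdef
  have hm2 : 2 ≤ m := Nat.le_floor (by exact_mod_cast hz2)
  have hm0 : m ≠ 0 := by omega
  set P := Finset.filter (fun p => Nat.Prime p) (Finset.range (m+1)) with hPdef
  have hPmem : ∀ p ∈ P, Nat.Prime p ∧ p ≤ m := by
    intro p hp
    rw [hPdef, Finset.mem_filter, Finset.mem_range] at hp
    exact ⟨hp.2, by omega⟩
  set S := (Finset.Icc 1 ⌊x⌋₊).filter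
      (fun n : ℕ => ∀ p ∈ n.primeFactors, (p : ℝ) ≤ z) with hSdef
  have hSfacts : ∀ n ∈ S, n ≠ 0 ∧ (n:ℝ) ≤ x ∧ n.primeFactors ⊆ P := by
    intro n hn
    rw [hSdef, Finset.mem_filter, Finset.mem_Icc] at hn
    obtain ⟨⟨h1, h2⟩, h3⟩ := hn
    refine ⟨by omega, ?_, ?_⟩
    · exact le_trans (Nat.cast_le.mpr h2) (Nat.floor_le hx0.le)
    · intro p hp
      have hple : p ≤ m := Nat.le_floor (h3 p hp)
      rw [hPdef, Finset.mem_filter, Finset.mem_range]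
      exact ⟨by omega, Nat.prime_of_mem_primeFactors hp⟩
  -- Step A
  have stepA : (S.card : ℝ) ≤ x ^ σ * ∑ n ∈ S, (n:ℝ) ^ (-σ) := by
    rw [Finset.mul_sum]
    have hc : (S.card : ℝ) = ∑ _n ∈ S, (1:ℝ) := by
      rw [Finset.sum_const, nsmul_eq_mul, mul_one]
    rw [hc]
    apply Finset.sum_le_sum
    intro n hn
    obtain ⟨hn0, hnx, -⟩ := hSfacts n hn
    have hnpos : (0:ℝ) < n := by exact_mod_cast Nat.pos_of_ne_zero hn0
    have key : x ^ σ * (n:ℝ) ^ (-σ) = (x / n) ^ σ := by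
      rw [Real.div_rpow hx0.le hnpos.le, Real.rpow_neg hnpos.le, div_eq_mul_inv]
    rw [key]
    calc (1:ℝ) = 1 ^ σ := (Real.one_rpow σ).symm
      _ ≤ (x / n)^σ :=
        Real.rpow_le_rpow (by norm_num) ((le_div_iff₀ hnpos).mpr (by linarith)) hσpos.le
  -- basic facts about the factors
  have hr : ∀ p ∈ P, 0 ≤ (p:ℝ)^(-σ) ∧ (p:ℝ)^(-σ) < 1 := by
    intro p hp
    have hp2 : 2 ≤ p := (hPmem p hp).1.two_le
    have hp1 : (1:ℝ) < p := by exact_mod_cast by omega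
    exact ⟨Real.rpow_nonneg (by positivity) _,
      Real.rpow_lt_one_of_one_lt_of_neg hp1 (by linarith)⟩
  -- Step B
  have stepB : ∑ n ∈ S, (n:ℝ)^(-σ) ≤ ∏ p ∈ P, (1 - (p:ℝ)^(-σ))⁻¹ := by
    set A := ⌊x⌋₊ + 1 with hAdef
    have expand := Finset.prod_sum (s := P) (t := fun _ => Finset.range A)
      (f := fun p a => ((p:ℝ)^(-σ))^a)
    have hprod : ∏ p ∈ P, ∑ a ∈ Finset.range A, ((p:ℝ)^(-σ))^a
        ≤ ∏ p ∈ P, (1 - (p:ℝ)^(-σ))⁻¹ :=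
      Finset.prod_le_prod
        (fun p hp => Finset.sum_nonneg fun a _ => pow_nonneg (hr p hp).1 a)
        (fun p hp => geom_sum_le' (hr p hp).1 (hr p hp).2 A)
    refine le_trans ?_ (le_trans (le_of_eq expand.symm) hprod)
    have hinj : ∀ n ∈ S, ∀ n' ∈ S,
        (fun p (_ : p ∈ P) => n.factorization p) = (fun p (_ : p ∈ P) => n'.factorization p)
        → n = n' := by
      intro n hn n' hn' heq
      obtain ⟨hn0, -, hnP⟩ := hSfacts n hn
      obtain ⟨hn'0, -, hn'P⟩ := hSfacts n' hn'
      have hpe : ∏ p ∈ P, p ^ n.factorization p = ∏ p ∈ P, p ^ n'.factorization p := by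
        apply Finset.prod_congr rfl
        intro p hp
        rw [congrFun (congrFun heq p) hp]
      rw [prod_factorization_eq hn0 hnP, prod_factorization_eq hn'0 hn'P] at hpe
      exact hpe
    have hrw : ∀ n ∈ S, (n:ℝ)^(-σ)
        = ∏ p ∈ P.attach, (((p:ℕ):ℝ)^(-σ))^(n.factorization p.1) := by
      intro n hn
      obtain ⟨hn0, -, hnP⟩ := hSfacts n hn
      rw [rpow_neg_eq_prod hn0 hnP (fun p hp => (hPmem p hp).1.pos) σ]
      exact (Finset.prod_attach P fun p => (((p:ℕ):ℝ)^(-σ))^(n.factorization p)).symm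
    have himsub : S.image (fun n => (fun q (_ : q ∈ P) => n.factorization q))
        ⊆ P.pi (fun _ => Finset.range A) := by
      intro f hf
      rw [Finset.mem_image] at hf
      obtain ⟨n, hn, rfl⟩ := hf
      rw [Finset.mem_pi]
      intro p hp
      rw [Finset.mem_range]
      obtain ⟨hn0, -, -⟩ := hSfacts n hn
      have h2 : n.factorization p < n := Nat.factorization_lt p hn0
      have h3 : n ≤ ⌊x⌋₊ := by
        have := hn; rw [hSdef, Finset.mem_filter, Finset.mem_Icc] at this
        exact this.1.2
      rw [hAdef]; omega
    calc ∑ n ∈ S, (n:ℝ)^(-σ)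
        = ∑ n ∈ S, ∏ p ∈ P.attach,
            (((p:ℕ):ℝ)^(-σ))^(n.factorization p.1) :=
          Finset.sum_congr rfl hrw
      _ = ∑ f ∈ S.image (fun n => (fun q (_ : q ∈ P) => n.factorization q)),
            ∏ p ∈ P.attach, (((p:ℕ):ℝ)^(-σ))^(f p.1 p.2) :=
          (Finset.sum_image (f := fun f : ∀ q ∈ P, ℕ =>
            ∏ p ∈ P.attach, (((p:ℕ):ℝ)^(-σ))^(f p.1 p.2))
            (g := fun n : ℕ => (fun q (_ : q ∈ P) => n.factorization q)) hinj).symm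
      _ ≤ ∑ f ∈ P.pi (fun _ => Finset.range A),
            ∏ p ∈ P.attach, (((p:ℕ):ℝ)^(-σ))^(f p.1 p.2) :=
          Finset.sum_le_sum_of_subset_of_nonneg himsub
            (fun f _ _ => Finset.prod_nonneg fun p _ => pow_nonneg (hr p.1 p.2).1 _)
  -- Step C
  have hple57 : ∀ p ∈ P, (p:ℝ)^(-σ) ≤ 5/7 := by
    intro p hp
    have hp2 : (2:ℝ) ≤ p := by exact_mod_cast (hPmem p hp).1.two_le
    have h1 : (p:ℝ)^(-σ) ≤ (2:ℝ)^(-σ) :=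
      Real.rpow_le_rpow_of_nonpos two_pos hp2 (by linarith)
    have h2 : (2:ℝ)^(-σ) ≤ (2:ℝ)^(-(1/2):ℝ) :=
      Real.rpow_le_rpow_of_exponent_le one_le_two (by linarith)
    have h3 : (2:ℝ)^(-(1/2):ℝ) = (Real.sqrt 2)⁻¹ := by
      rw [Real.rpow_neg (by norm_num : (0:ℝ) ≤ 2), Real.sqrt_eq_rpow]
    have h4 : (7/5:ℝ) ≤ Real.sqrt 2 := (Real.le_sqrt (by norm_num) (by norm_num)).mpr (by norm_num)
    have h5 : (Real.sqrt 2)⁻¹ ≤ 5/7 := by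
      have hs : (0:ℝ) < Real.sqrt 2 := by positivity
      rw [inv_le_comm₀ (by positivity) (by norm_num)]
      calc (5/7 : ℝ)⁻¹ = 7/5 := by norm_num
        _ ≤ Real.sqrt 2 := h4
    linarith
  have stepC : ∏ p ∈ P, (1 - (p:ℝ)^(-σ))⁻¹ ≤ Real.exp (3.5 * ∑ p ∈ P, (p:ℝ)^(-σ)) := by
    rw [Finset.mul_sum, Real.exp_sum]
    apply Finset.prod_le_prod
    · intro p hp
      have := hple57 p hp
      have h0 : (0:ℝ) < 1 - (p:ℝ)^(-σ) := by linarith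
      positivity
    · intro p hp
      exact inv_one_sub_le (hr p hp).1 (hple57 p hp)
  -- Step D
  set J := Nat.log 2 m with hJdef
  have hJ1 : 1 ≤ J := by
    rw [hJdef]
    have h : (2:ℕ)^1 ≤ m := by simpa using hm2
    exact (Nat.le_log_iff_pow_le one_lt_two hm0).mpr h
  have hlog2pos : (0:ℝ) < Real.log 2 := Real.log_pos one_lt_two
  have hlog2_23 : (2/3:ℝ) ≤ Real.log 2 := by linarith [Real.log_two_gt_d9]
  have hJlog2 : (J:ℝ) * Real.log 2 ≤ L1 / u := by
    have ha : ((2:ℕ):ℝ)^J ≤ (m:ℝ) := by exact_mod_cast Nat.pow_log_le_self 2 hm0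
    have hb : (J:ℝ) * Real.log 2 ≤ Real.log m := by
      rw [← Real.log_pow]
      exact Real.log_le_log (by positivity) (by exact_mod_cast ha)
    have hmRpos : (0:ℝ) < m := by exact_mod_cast Nat.pos_of_ne_zero hm0
    have hc : Real.log m ≤ Real.log z := Real.log_le_log hmRpos (Nat.floor_le hzpos.le)
    rw [hlogz] at hc
    linarith
  have hmaps : ∀ p ∈ P, Nat.log 2 p ∈ Finset.Icc 1 J := by
    intro p hp
    obtain ⟨hpp, hpm⟩ := hPmem p hp
    rw [Finset.mem_Icc]
    constructor
    · have h : (2:ℕ)^1 ≤ p := by simpa using hpp.two_le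
      exact (Nat.le_log_iff_pow_le one_lt_two hpp.pos.ne').mpr h
    · rw [hJdef]; exact Nat.log_mono_right hpm
  have hfiber : ∀ j ∈ Finset.Icc 1 J,
      ∑ p ∈ P.filter (fun p => Nat.log 2 p = j), (p:ℝ)^(-σ)
        ≤ (4 / j) * Real.exp (β * (j * Real.log 2)) := by
    intro j hj
    rw [Finset.mem_Icc] at hj
    have hjR : (1:ℝ) ≤ j := by exact_mod_cast hj.1
    have hjRpos : (0:ℝ) < j := by linarith
    set Q := P.filter (fun p => Nat.log 2 p = j) with hQdef
    have hQprop : ∀ p ∈ Q, Nat.Prime p ∧ 2^j ≤ p ∧ p < 2^(j+1) := by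
      intro p hpQ
      rw [hQdef, Finset.mem_filter] at hpQ
      obtain ⟨hpP, hplog⟩ := hpQ
      have hpp := (hPmem p hpP).1
      refine ⟨hpp, ?_, ?_⟩
      · rw [← hplog]; exact Nat.pow_log_le_self 2 hpp.pos.ne'
      · rw [← hplog]; exact Nat.lt_pow_succ_log_self one_lt_two p
    have hcheb : (j : ℝ) * Q.card ≤ 2^(j+2) := by
      exact_mod_cast cheb_dyadic j Q hQprop
    have hexp2j : ((2:ℝ))^j = Real.exp ((j:ℝ) * Real.log 2) := by
      rw [Real.exp_nat_mul, Real.exp_log two_pos]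
    have hterm : ∀ p ∈ Q, (p:ℝ)^(-σ) ≤ Real.exp (-σ * ((j:ℝ) * Real.log 2)) := by
      intro p hpQ
      have h2j : ((2:ℝ))^j ≤ (p:ℝ) := by exact_mod_cast (hQprop p hpQ).2.1
      have h2jpos : (0:ℝ) < (2:ℝ)^j := by positivity
      calc (p:ℝ)^(-σ) ≤ (((2:ℝ))^j)^(-σ) :=
            Real.rpow_le_rpow_of_nonpos h2jpos h2j (by linarith)
        _ = Real.exp (-σ * ((j:ℝ) * Real.log 2)) := by
            rw [hexp2j, Real.rpow_def_of_pos (Real.exp_pos _), Real.log_exp]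
            ring_nf
    have hsum : ∑ p ∈ Q, (p:ℝ)^(-σ) ≤ (Q.card : ℝ) * Real.exp (-σ * ((j:ℝ) * Real.log 2)) := by
      have := Finset.sum_le_card_nsmul Q _ _ hterm
      simpa [nsmul_eq_mul] using this
    have hcard : (Q.card : ℝ) ≤ 4 * Real.exp ((j:ℝ) * Real.log 2) / j := by
      rw [le_div_iff₀ hjRpos]
      have h2j2 : ((2:ℝ))^(j+2) = 4 * Real.exp ((j:ℝ) * Real.log 2) := by
        rw [pow_add, hexp2j]; ring
      calc (Q.card : ℝ) * j = j * Q.card := by ring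
        _ ≤ 2^(j+2) := hcheb
        _ = 4 * Real.exp ((j:ℝ) * Real.log 2) := h2j2
    have hexp_pos : (0:ℝ) < Real.exp (-σ * ((j:ℝ) * Real.log 2)) := Real.exp_pos _
    calc ∑ p ∈ Q, (p:ℝ)^(-σ)
        ≤ (Q.card : ℝ) * Real.exp (-σ * ((j:ℝ) * Real.log 2)) := hsum
      _ ≤ (4 * Real.exp ((j:ℝ) * Real.log 2) / j) * Real.exp (-σ * ((j:ℝ) * Real.log 2)) :=
          mul_le_mul_of_nonneg_right hcard hexp_pos.le
      _ = (4 / j) * Real.exp (β * ((j:ℝ) * Real.log 2)) := by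
          rw [div_mul_eq_mul_div, mul_assoc, ← Real.exp_add, div_mul_eq_mul_div]
          congr 2
          rw [hσdef]; ring
  have hsplit : ∀ j ∈ Finset.Icc 1 J, (4 / j : ℝ) * Real.exp (β * (j * Real.log 2))
      ≤ 16 / j + 2 * β * Real.exp (β * (j * Real.log 2)) := by
    intro j hj
    rw [Finset.mem_Icc] at hj
    have hjR : (1:ℝ) ≤ j := by exact_mod_cast hj.1
    have hjRpos : (0:ℝ) < j := by linarith
    by_cases hc : β * j ≤ 2
    · have h1 : β * ((j:ℝ) * Real.log 2) ≤ 2 * Real.log 2 := by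
        have : β * ((j:ℝ) * Real.log 2) = (β * j) * Real.log 2 := by ring
        rw [this]
        exact mul_le_mul_of_nonneg_right hc hlog2pos.le
      have h2 : Real.exp (β * ((j:ℝ) * Real.log 2)) ≤ 4 := by
        calc Real.exp (β * ((j:ℝ) * Real.log 2)) ≤ Real.exp (2 * Real.log 2) :=
              Real.exp_le_exp.mpr h1
          _ = 4 := by
              rw [show (2:ℝ)*Real.log 2 = Real.log 2 + Real.log 2 by ring, Real.exp_add,
                Real.exp_log two_pos]
              norm_num
      have h3 : (4/j : ℝ) * Real.exp (β * ((j:ℝ) * Real.log 2)) ≤ 4/j * 4 :=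
        mul_le_mul_of_nonneg_left h2 (by positivity)
      have h4 : (4:ℝ)/j*4 = 16/j := by ring
      have hnn : (0:ℝ) ≤ 2*β*Real.exp (β * ((j:ℝ) * Real.log 2)) := by positivity
      linarith
    · push_neg at hc
      have h1 : 4/(j:ℝ) ≤ 2*β := by
        rw [div_le_iff₀ hjRpos]
        nlinarith
      have h2 : (0:ℝ) ≤ Real.exp (β * ((j:ℝ) * Real.log 2)) := (Real.exp_pos _).le
      have hnn : (0:ℝ) ≤ 16/(j:ℝ) := by positivity
      nlinarith [mul_le_mul_of_nonneg_right h1 h2]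
  have hharm : ∑ j ∈ Finset.Icc 1 J, (16 / j : ℝ) ≤ 32 * u := by
    have h1 : ∑ j ∈ Finset.Icc 1 J, (16/j:ℝ) = 16 * ∑ j ∈ Finset.Icc 1 J, (1/j:ℝ) := by
      rw [Finset.mul_sum]; apply Finset.sum_congr rfl; intros; ring
    have h2 := harmonic_le J
    have hJL1 : (J:ℝ) ≤ L1 := by
      have hLu : L1 / u ≤ L1 / 16 := by
        rw [div_le_div_iff₀ hupos (by norm_num : (0:ℝ) < 16)]
        exact mul_le_mul_of_nonneg_left hu16 hL1pos.le
      have hc : (J:ℝ)*(2/3) ≤ (J:ℝ)*Real.log 2 :=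
        mul_le_mul_of_nonneg_left hlog2_23 (Nat.cast_nonneg J)
      linarith
    have hJu : Real.log J ≤ u := by
      have hJpos : (0:ℝ) < J := by exact_mod_cast hJ1
      rw [hudef]
      exact Real.log_le_log hJpos hJL1
    rw [h1]
    linarith
  have hgeom : ∑ j ∈ Finset.Icc 1 J, 2*β*Real.exp (β*(j*Real.log 2)) ≤ 6 * u := by
    set r := Real.exp (β * Real.log 2) with hrdef
    have hterm : ∀ j : ℕ, Real.exp (β*((j:ℝ)*Real.log 2)) = r^j := by
      intro j
      rw [hrdef, ← Real.exp_nat_mul]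
      congr 1
      ring
    have hβlog2pos : 0 < β * Real.log 2 := by positivity
    have hr1 : 1 < r := by
      rw [hrdef]
      linarith [Real.add_one_le_exp (β*Real.log 2)]
    have hrm1 : β * Real.log 2 ≤ r - 1 := by
      rw [hrdef]; linarith [Real.add_one_le_exp (β*Real.log 2)]
    have hsum1 : ∑ j ∈ Finset.Icc 1 J, r^j ≤ ∑ j ∈ Finset.range (J+1), r^j :=
      Finset.sum_le_sum_of_subset_of_nonneg
        (by intro j hj; rw [Finset.mem_Icc] at hj; rw [Finset.mem_range]; omega)
        (fun j _ _ => by positivity)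
    have hsum2 : ∑ j ∈ Finset.range (J+1), r^j = (r^(J+1) - 1)/(r-1) := geom_sum_eq hr1.ne' (J+1)
    have hrJ : r^J ≤ u := by
      have h4 : r^J = Real.exp ((J:ℝ) * (β * Real.log 2)) := by
        rw [hrdef, ← Real.exp_nat_mul]
      have h2 : (J:ℝ) * (β * Real.log 2) ≤ β * (L1/u) := by
        have := mul_le_mul_of_nonneg_left hJlog2 hβpos.le
        nlinarith [hJlog2, hβpos.le]
      have h3 : β * (L1/u) = L3 := by
        rw [hβdef]; field_simp
      rw [h4]
      calc Real.exp ((J:ℝ) * (β * Real.log 2)) ≤ Real.exp L3 :=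
            Real.exp_le_exp.mpr (by rw [← h3]; exact h2)
        _ = u := Real.exp_log hupos
    have hexphalf : Real.exp (1/2) ≤ 2 := by
      have h1 : Real.exp (1/2) ^ (2:ℕ) = Real.exp 1 := by
        rw [← Real.exp_nat_mul]; norm_num
      nlinarith [Real.exp_one_lt_d9, Real.exp_pos (1/2)]
    have hlog2le1 : Real.log 2 ≤ 1 := by
      linarith [Real.log_le_sub_one_of_pos (show (0:ℝ) < 2 by norm_num)]
    have hrle2 : r ≤ 2 := by
      rw [hrdef]
      calc Real.exp (β*Real.log 2) ≤ Real.exp (1/2) := by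
            apply Real.exp_le_exp.mpr
            nlinarith
        _ ≤ 2 := hexphalf
    have hrJ1 : r^(J+1) ≤ 2*u := by
      rw [pow_succ]
      calc r^J * r ≤ u * 2 := mul_le_mul hrJ hrle2 (by positivity) (by linarith)
        _ = 2*u := by ring
    have key : ∑ j ∈ Finset.Icc 1 J, 2*β*Real.exp (β*(j*Real.log 2))
        = 2*β*∑ j ∈ Finset.Icc 1 J, r^j := by
      rw [Finset.mul_sum]
      exact Finset.sum_congr rfl (fun j _ => by rw [hterm j])
    have hS : ∑ j ∈ Finset.Icc 1 J, r^j ≤ 2*u/(β*Real.log 2) := by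
      have h5 : (r^(J+1) - 1)/(r-1) ≤ 2*u/(β*Real.log 2) :=
        div_le_div₀ (by positivity) (by linarith) hβlog2pos hrm1
      calc ∑ j ∈ Finset.Icc 1 J, r^j ≤ ∑ j ∈ Finset.range (J+1), r^j := hsum1
        _ = (r^(J+1) - 1)/(r-1) := hsum2
        _ ≤ 2*u/(β*Real.log 2) := h5
    have heq2 : 2*β*(2*u/(β*Real.log 2)) = 4*u/Real.log 2 := by
      field_simp
      ring
    have hle6 : 4*u/Real.log 2 ≤ 6*u := by
      rw [div_le_iff₀ hlog2pos]
      nlinarith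
    rw [key]
    calc 2*β*∑ j ∈ Finset.Icc 1 J, r^j ≤ 2*β*(2*u/(β*Real.log 2)) :=
          mul_le_mul_of_nonneg_left hS (by positivity)
      _ = 4*u/Real.log 2 := heq2
      _ ≤ 6*u := hle6
  have stepD : ∑ p ∈ P, (p:ℝ)^(-σ) ≤ 56 * u := by
    rw [← Finset.sum_fiberwise_of_maps_to hmaps (fun p => (p:ℝ)^(-σ))]
    calc ∑ j ∈ Finset.Icc 1 J, ∑ p ∈ P.filter (fun p => Nat.log 2 p = j), (p:ℝ)^(-σ)
        ≤ ∑ j ∈ Finset.Icc 1 J, (4 / (j:ℝ)) * Real.exp (β * (j * Real.log 2)) :=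
          Finset.sum_le_sum hfiber
      _ ≤ ∑ j ∈ Finset.Icc 1 J, ((16 / (j:ℝ)) + 2*β*Real.exp (β * (j * Real.log 2))) :=
          Finset.sum_le_sum hsplit
      _ = (∑ j ∈ Finset.Icc 1 J, (16 / (j:ℝ)))
            + ∑ j ∈ Finset.Icc 1 J, 2*β*Real.exp (β * (j * Real.log 2)) :=
          Finset.sum_add_distrib
      _ ≤ 32*u + 6*u := add_le_add hharm hgeom
      _ ≤ 56*u := by linarith
  -- combine everything
  have hxσ : (0:ℝ) ≤ x ^ σ := (Real.rpow_pos_of_pos hx0 σ).le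
  have chain1 : (S.card:ℝ) ≤ x^σ * Real.exp (3.5 * (56*u)) := by
    calc (S.card:ℝ) ≤ x^σ * ∑ n ∈ S, (n:ℝ)^(-σ) := stepA
      _ ≤ x^σ * ∏ p ∈ P, (1 - (p:ℝ)^(-σ))⁻¹ := mul_le_mul_of_nonneg_left stepB hxσ
      _ ≤ x^σ * Real.exp (3.5 * ∑ p ∈ P, (p:ℝ)^(-σ)) := mul_le_mul_of_nonneg_left stepC hxσ
      _ ≤ x^σ * Real.exp (3.5 * (56*u)) :=
          mul_le_mul_of_nonneg_left (Real.exp_le_exp.mpr (by nlinarith [stepD])) hxσ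
  have hfinal : x^σ * Real.exp (3.5*(56*u)) = x * Real.exp ((196 - L3)*u) := by
    rw [Real.rpow_def_of_pos hx0, ← Real.exp_add]
    conv_rhs => rw [← Real.exp_log hx0, ← Real.exp_add]
    congr 1
    have hb : L1 * β = u * L3 := by
      rw [hβdef]
      field_simp
    rw [hσdef, ← hL1def]
    nlinarith [hb]
  rw [hfinal] at chain1
  exact chain1
private lemma all_bound {x : ℝ} (hx : 3 ≤ x) :
    (((Finset.Icc 1 ⌊x⌋₊).filter
        (fun n : ℕ => ∀ p ∈ n.primeFactors, (p : ℝ) ≤ x ^ (1 / Real.log (Real.log x)))).card : ℝ) ≤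
      x * Real.exp ((196 - Real.log (Real.log (Real.log x))) * Real.log (Real.log x)) := by
  by_cases hbig : Real.exp (Real.exp (Real.exp 3)) ≤ x
  · exact main_bound hbig
  push_neg at hbig
  have hx0 : (0:ℝ) < x := by linarith
  have hloggt : 1 < Real.log x := by
    rw [Real.lt_log_iff_exp_lt hx0]
    nlinarith [Real.exp_one_lt_d9]
  have hupos : 0 < Real.log (Real.log x) := Real.log_pos hloggt
  have hL3le : Real.log (Real.log (Real.log x)) ≤ 3 := by
    have h1 : Real.log x ≤ Real.exp (Real.exp 3) := by
      calc Real.log x ≤ Real.log (Real.exp (Real.exp (Real.exp 3))) :=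
            Real.log_le_log hx0 hbig.le
        _ = Real.exp (Real.exp 3) := Real.log_exp _
    have h2 : Real.log (Real.log x) ≤ Real.exp 3 := by
      calc Real.log (Real.log x) ≤ Real.log (Real.exp (Real.exp 3)) :=
            Real.log_le_log (by linarith) h1
        _ = Real.exp 3 := Real.log_exp _
    calc Real.log (Real.log (Real.log x)) ≤ Real.log (Real.exp 3) :=
          Real.log_le_log hupos h2
      _ = 3 := Real.log_exp _
  have h1exp : (1:ℝ) ≤ Real.exp ((196 - Real.log (Real.log (Real.log x))) * Real.log (Real.log x)) := by
    have hnn : (0:ℝ) ≤ (196 - Real.log (Real.log (Real.log x))) * Real.log (Real.log x) := by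
      nlinarith
    calc (1:ℝ) = Real.exp 0 := Real.exp_zero.symm
      _ ≤ _ := Real.exp_le_exp.mpr hnn
  calc (((Finset.Icc 1 ⌊x⌋₊).filter
        (fun n : ℕ => ∀ p ∈ n.primeFactors, (p : ℝ) ≤ x ^ (1 / Real.log (Real.log x)))).card : ℝ)
      ≤ x := card_le_x hx0.le _
    _ = x * 1 := (mul_one x).symm
    _ ≤ _ := mul_le_mul_of_nonneg_left h1exp hx0.le

/-- With `z = x^{1/log log x}`, the count `Ψ(x,z)` of `z`-smooth numbers up to `x`
satisfies `Ψ(x,z) ≪ x/(log x)^{(1+o(1)) log log log x}` as `x → ∞`. -/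
theorem stmt_17 :
    ∃ C > (0 : ℝ), ∃ o : ℝ → ℝ, Tendsto o atTop (nhds 0) ∧
      ∀ x : ℝ, 3 ≤ x →
        (((Finset.Icc 1 ⌊x⌋₊).filter
            (fun n : ℕ => ∀ p ∈ n.primeFactors,
              (p : ℝ) ≤ x ^ (1 / Real.log (Real.log x)))).card : ℝ) ≤
          C * x / (Real.log x) ^ ((1 + o x) * Real.log (Real.log (Real.log x))) := by
  refine ⟨1, one_pos, fun x => -196 / Real.log (Real.log (Real.log x)), ?_, ?_⟩
  · have h3 : Tendsto (fun x : ℝ => Real.log (Real.log (Real.log x))) atTop atTop :=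
      Real.tendsto_log_atTop.comp (Real.tendsto_log_atTop.comp Real.tendsto_log_atTop)
    have h4 : Tendsto (fun x : ℝ => (Real.log (Real.log (Real.log x)))⁻¹) atTop (nhds 0) :=
      tendsto_inv_atTop_zero.comp h3
    have h5 := h4.const_mul (-196 : ℝ)
    rw [mul_zero] at h5
    simpa [div_eq_mul_inv] using h5
  · intro x hx
    have hball := all_bound hx
    have hx0 : (0:ℝ) < x := by linarith
    have hloggt : 1 < Real.log x := by
      rw [Real.lt_log_iff_exp_lt hx0]
      nlinarith [Real.exp_one_lt_d9]
    have hlogpos : 0 < Real.log x := by linarith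
    show (((Finset.Icc 1 ⌊x⌋₊).filter
        (fun n : ℕ => ∀ p ∈ n.primeFactors, (p : ℝ) ≤ x ^ (1 / Real.log (Real.log x)))).card : ℝ)
        ≤ 1 * x / (Real.log x) ^ ((1 + -196 / Real.log (Real.log (Real.log x)))
            * Real.log (Real.log (Real.log x)))
    by_cases hz : Real.log (Real.log (Real.log x)) = 0
    · rw [hz, mul_zero, Real.rpow_zero, one_mul, div_one]
      exact card_le_x hx0.le _
    · have hexp_eq : (Real.log x) ^ ((1 + -196 / Real.log (Real.log (Real.log x)))
          * Real.log (Real.log (Real.log x)))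
          = Real.exp ((Real.log (Real.log (Real.log x)) - 196) * Real.log (Real.log x)) := by
        rw [Real.rpow_def_of_pos hlogpos]
        congr 1
        have h6 : (1 + -196 / Real.log (Real.log (Real.log x))) * Real.log (Real.log (Real.log x))
            = Real.log (Real.log (Real.log x)) - 196 := by
          field_simp
          ring
        rw [h6]
        ring
      rw [one_mul, hexp_eq]
      have hdiv : x / Real.exp ((Real.log (Real.log (Real.log x)) - 196) * Real.log (Real.log x))
          = x * Real.exp ((196 - Real.log (Real.log (Real.log x))) * Real.log (Real.log x)) := by
        rw [div_eq_mul_inv, ← Real.exp_neg]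
        congr 2
        ring
      rw [hdiv]
      exact hball
end
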